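/- arXiv:1207.1582 — 3 statements merged into one kernel-verified Lean document; each statement's English description precedes it below -/
import Mathlib

section
/- Let N ≥ 2, c ∈ (−1, 1/(N−1)), and α = c/(2(1+c)(1+c(1−N))). Define for σ > 0: I(σ) = ∫_{ℝ^N} exp(σ u_1 − α(∑_{i=1}^N u_i)² − (1/(2(1+c)))∑_{i=1}^N u_i²) ∏_{1≤i<j≤N}|u_j − u_i| du, and J = ∫_{ℝ^N} exp(−α(∑_{i=1}^N v_i)² − (1/(2(1+c)))∑_{i=1}^N v_i²) ∏_{2≤i<j≤N}|v_j − v_i| dv. Then as σ → ∞, I(σ) is asymptotically equivalent to (1+c)^{N−1} σ^{N−1} e^{σ²/2} · J, i.e. I(σ)/((1+c)^{N−1} σ^{N−1} e^{σ²/2} J) → 1. -/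
open MeasureTheory Finset Filter

lemma aux_int1D (M : ℕ) {δ : ℝ} (hδ : 0 < δ) :
    Integrable (fun x : ℝ => (1 + |x|) ^ M * Real.exp (-δ * x ^ 2)) := by
  apply Integrable.mono'
    ((integrable_exp_neg_mul_sq (half_pos hδ)).const_mul (Real.exp ((M : ℝ) ^ 2 / (2 * δ))))
  · have : Continuous fun x : ℝ => (1 + |x|) ^ M * Real.exp (-δ * x ^ 2) := by fun_prop
    exact this.aestronglyMeasurable
  · filter_upwards with x
    have h1 : (1 + |x|) ^ M ≤ Real.exp ((M : ℝ) * |x|) := by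
      calc (1 + |x|) ^ M ≤ (Real.exp |x|) ^ M := by
            apply pow_le_pow_left₀ (by positivity)
            linarith [Real.add_one_le_exp |x|]
        _ = Real.exp ((M : ℝ) * |x|) := by rw [← Real.exp_nat_mul]
    have h2 : (M : ℝ) * |x| - δ * x ^ 2 ≤ (M : ℝ) ^ 2 / (2 * δ) + (-(δ / 2) * x ^ 2) := by
      have hx : x ^ 2 = |x| ^ 2 := (sq_abs x).symm
      have h2δ : (0:ℝ) < 2 * δ := by linarith
      have key : (M : ℝ) ^ 2 / (2 * δ) + -(δ / 2) * x ^ 2 - ((M : ℝ) * |x| - δ * x ^ 2)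
          = ((M : ℝ) - δ * |x|) ^ 2 / (2 * δ) := by
        field_simp; rw [show x ^ 2 = |x| ^ 2 from (sq_abs x).symm]; ring
      linarith [div_nonneg (sq_nonneg ((M : ℝ) - δ * |x|)) h2δ.le, key]
    rw [Real.norm_eq_abs, abs_of_nonneg (by positivity)]
    calc (1 + |x|) ^ M * Real.exp (-δ * x ^ 2)
        ≤ Real.exp ((M : ℝ) * |x|) * Real.exp (-δ * x ^ 2) :=
          mul_le_mul_of_nonneg_right h1 (Real.exp_pos _).le
      _ = Real.exp ((M : ℝ) * |x| - δ * x ^ 2) := by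
          rw [← Real.exp_add]; ring_nf
      _ ≤ Real.exp ((M : ℝ) ^ 2 / (2 * δ) + (-(δ / 2) * x ^ 2)) := Real.exp_le_exp.2 h2
      _ = Real.exp ((M : ℝ) ^ 2 / (2 * δ)) * Real.exp (-(δ / 2) * x ^ 2) := Real.exp_add _ _

lemma aux_hyperplane_null {N : ℕ} {i j : Fin N} (hij : i ≠ j) :
    (volume : Measure (Fin N → ℝ)) {x | x j - x i = 0} = 0 := by
  have heq : {x : Fin N → ℝ | x j - x i = 0}
      = (LinearMap.ker ((LinearMap.proj j : (Fin N → ℝ) →ₗ[ℝ] ℝ) - LinearMap.proj i) : Set _) := by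
    ext x; simp [LinearMap.mem_ker, sub_eq_zero]
  rw [heq]
  apply Measure.addHaar_submodule
  intro h
  have h0 := LinearMap.ker_eq_top.mp h
  have h1 := DFunLike.congr_fun h0 (Pi.single j 1)
  simp [Pi.single_apply, hij, Ne.symm hij] at h1

set_option maxHeartbeats 3200000 in
/-- Laplace-method asymptotics for the normalization constant of the matrix
multiplicative chaos: as `σ → ∞`,
`I(σ) ∼ (1+c)^{N−1} σ^{N−1} e^{σ²/2} J`. -/
theorem stmt_9 (N : ℕ) (hN : 2 ≤ N) (c : ℝ)
    (hc : c ∈ Set.Ioo (-1 : ℝ) (1 / ((N : ℝ) - 1)))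
    (α : ℝ) (hα : α = c / (2 * (1 + c) * (1 + c * (1 - N))))
    (I : ℝ → ℝ)
    (hI : I = fun σ => ∫ u : Fin N → ℝ,
        Real.exp (σ * u ⟨0, by omega⟩ - α * (∑ i, u i) ^ 2
            - (1 / (2 * (1 + c))) * ∑ i, u i ^ 2)
          * ∏ i, ∏ j ∈ Finset.univ.filter fun j => i < j, |u j - u i|)
    (J : ℝ)
    (hJ : J = ∫ v : Fin N → ℝ,
        Real.exp (-α * (∑ i, v i) ^ 2 - (1 / (2 * (1 + c))) * ∑ i, v i ^ 2)
          * ∏ i ∈ Finset.univ.filter fun i : Fin N => (⟨0, by omega⟩ : Fin N) < i,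
              ∏ j ∈ Finset.univ.filter fun j => i < j, |v j - v i|) :
    Tendsto (fun σ => I σ / ((1 + c) ^ (N - 1) * σ ^ (N - 1)
        * Real.exp (σ ^ 2 / 2) * J)) atTop (nhds 1) := by
  obtain ⟨hc1, hc2⟩ := hc
  have hNpos : 0 < N := by omega
  have hN1 : (1:ℝ) ≤ (N:ℝ) - 1 := by
    have h2 : (2:ℝ) ≤ (N:ℝ) := by exact_mod_cast hN
    linarith
  have hc0 : 0 < 1 + c := by linarith
  have hcN : 0 < 1 + c * (1 - (N:ℝ)) := by
    have h1 : c * ((N:ℝ) - 1) < 1 := by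
      have := (lt_div_iff₀ (by linarith : (0:ℝ) < (N:ℝ) - 1)).mp hc2
      linarith
    nlinarith
  set e₀ : Fin N := ⟨0, hNpos⟩ with he₀
  -- the limiting integrand
  set f : (Fin N → ℝ) → ℝ := fun v =>
    Real.exp (-α * (∑ i, v i) ^ 2 - (1 / (2 * (1 + c))) * ∑ i, v i ^ 2) *
      ∏ i ∈ Finset.univ.filter fun i : Fin N => e₀ < i,
        ∏ j ∈ Finset.univ.filter fun j => i < j, |v j - v i| with hf
  have hJf : J = ∫ v, f v := hJ
  -- shift vector
  set a : ℝ → (Fin N → ℝ) := fun σ i => if i = e₀ then σ else -σ * c with ha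
  have ha_e₀ : ∀ σ, a σ e₀ = σ := by intro σ; simp [ha]
  have ha_ne : ∀ σ, ∀ i, i ≠ e₀ → a σ i = -σ * c := by intro σ i h; simp [ha, h]
  have herase : (Finset.univ.filter fun i : Fin N => e₀ < i) = Finset.univ.erase e₀ := by
    ext i
    simp only [Finset.mem_filter, Finset.mem_erase, Finset.mem_univ, true_and, and_true]
    constructor
    · exact fun h => ne_of_gt h
    · intro h
      refine lt_of_le_of_ne ?_ (Ne.symm h)
      show e₀ ≤ i
      simp [he₀, Fin.le_def]
  have hcard : (Finset.univ.filter fun i : Fin N => e₀ < i).card = N - 1 := by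
    rw [herase, Finset.card_erase_of_mem (Finset.mem_univ _), Finset.card_univ, Fintype.card_fin]
  -- sums of the shift
  have hsumA : ∀ σ, ∑ i, a σ i = σ + ((N:ℝ) - 1) * (-σ * c) := by
    intro σ
    rw [← Finset.add_sum_erase Finset.univ (a σ) (Finset.mem_univ e₀), ha_e₀]
    congr 1
    rw [Finset.sum_congr rfl (fun i hi => ha_ne σ i (Finset.ne_of_mem_erase hi))]
    rw [Finset.sum_const, Finset.card_erase_of_mem (Finset.mem_univ _), Finset.card_univ,
      Fintype.card_fin, nsmul_eq_mul, Nat.cast_sub (by omega : 1 ≤ N)]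
    push_cast
    ring
  have hsumB : ∀ σ (v : Fin N → ℝ), ∑ i, a σ i * v i
      = σ * v e₀ + (-σ * c) * ((∑ i, v i) - v e₀) := by
    intro σ v
    rw [← Finset.add_sum_erase Finset.univ (fun i => a σ i * v i) (Finset.mem_univ e₀), ha_e₀]
    congr 1
    rw [Finset.sum_congr rfl (fun i hi => by rw [ha_ne σ i (Finset.ne_of_mem_erase hi)])]
    rw [← Finset.mul_sum]
    congr 1
    have h := Finset.add_sum_erase Finset.univ v (Finset.mem_univ e₀)
    linarith [h]
  have hsumC : ∀ σ, ∑ i, (a σ i) ^ 2 = σ ^ 2 + ((N:ℝ) - 1) * (σ * c) ^ 2 := by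
    intro σ
    rw [← Finset.add_sum_erase Finset.univ (fun i => a σ i ^ 2) (Finset.mem_univ e₀), ha_e₀]
    congr 1
    rw [Finset.sum_congr rfl (fun i hi => by rw [ha_ne σ i (Finset.ne_of_mem_erase hi)])]
    rw [Finset.sum_const, Finset.card_erase_of_mem (Finset.mem_univ _), Finset.card_univ,
      Fintype.card_fin, nsmul_eq_mul, Nat.cast_sub (by omega : 1 ≤ N)]
    push_cast
    ring
  -- exponent identity
  have hexp : ∀ σ (v : Fin N → ℝ),
      σ * (v e₀ + a σ e₀) - α * (∑ i, (v i + a σ i)) ^ 2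
          - (1 / (2 * (1 + c))) * ∑ i, (v i + a σ i) ^ 2
      = σ ^ 2 / 2 + (-α * (∑ i, v i) ^ 2 - (1 / (2 * (1 + c))) * ∑ i, v i ^ 2) := by
    intro σ v
    have h1 : ∑ i, (v i + a σ i) = (∑ i, v i) + (σ + ((N:ℝ) - 1) * (-σ * c)) := by
      rw [Finset.sum_add_distrib, hsumA σ]
    have h2 : ∑ i, (v i + a σ i) ^ 2
        = (∑ i, v i ^ 2) + 2 * (∑ i, a σ i * v i) + ∑ i, (a σ i) ^ 2 := by
      rw [Finset.sum_congr rfl (fun i (_ : i ∈ Finset.univ) =>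
        (by ring : (v i + a σ i) ^ 2 = v i ^ 2 + (2 * (a σ i * v i) + a σ i ^ 2))),
        Finset.sum_add_distrib, Finset.sum_add_distrib, ← Finset.mul_sum]
      ring
    rw [h1, h2, hsumB σ v, hsumC σ, ha_e₀, hα]
    have hne1 : (1 + c) ≠ 0 := hc0.ne'
    have hne2 : (1 + c * (1 - (N:ℝ))) ≠ 0 := hcN.ne'
    field_simp
    ring
  -- product identity
  have hprod : ∀ σ (v : Fin N → ℝ),
      (∏ i, ∏ j ∈ Finset.univ.filter fun j => i < j, |(v j + a σ j) - (v i + a σ i)|)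
      = (∏ j ∈ Finset.univ.filter fun j : Fin N => e₀ < j, |v j - v e₀ - σ * (1 + c)|) *
        ∏ i ∈ Finset.univ.filter fun i : Fin N => e₀ < i,
          ∏ j ∈ Finset.univ.filter fun j => i < j, |v j - v i| := by
    intro σ v
    rw [← Finset.mul_prod_erase Finset.univ _ (Finset.mem_univ e₀), ← herase]
    congr 1
    · apply Finset.prod_congr rfl
      intro j hj
      have hj' : e₀ < j := (Finset.mem_filter.mp hj).2
      rw [ha_e₀, ha_ne σ j (ne_of_gt hj')]
      congr 1
      ring
    · apply Finset.prod_congr rfl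
      intro i hi
      have hi2 : e₀ < i := (Finset.mem_filter.mp hi).2
      apply Finset.prod_congr rfl
      intro j hj
      have hj2 : i < j := (Finset.mem_filter.mp hj).2
      rw [ha_ne σ i (ne_of_gt hi2), ha_ne σ j (ne_of_gt (lt_trans hi2 hj2))]
      congr 1
      ring
  -- the combined pointwise shift identity
  have hshift : ∀ σ (v : Fin N → ℝ),
      Real.exp (σ * (v + a σ) e₀ - α * (∑ i, (v + a σ) i) ^ 2
          - (1 / (2 * (1 + c))) * ∑ i, (v + a σ) i ^ 2)
        * ∏ i, ∏ j ∈ Finset.univ.filter fun j => i < j, |(v + a σ) j - (v + a σ) i|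
      = Real.exp (σ ^ 2 / 2) *
          ((∏ j ∈ Finset.univ.filter fun j : Fin N => e₀ < j, |v j - v e₀ - σ * (1 + c)|) * f v) := by
    intro σ v
    simp only [Pi.add_apply]
    rw [hexp σ v, hprod σ v, Real.exp_add, hf]
    ring
  -- step 1 : exact rewriting of I
  have hstep1 : ∀ σ : ℝ, I σ = Real.exp (σ ^ 2 / 2) *
      ∫ v : Fin N → ℝ,
        (∏ j ∈ Finset.univ.filter fun j : Fin N => e₀ < j, |v j - v e₀ - σ * (1 + c)|) * f v := by
    intro σ
    simp only [hI]
    calc (∫ u : Fin N → ℝ,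
          Real.exp (σ * u e₀ - α * (∑ i, u i) ^ 2 - (1 / (2 * (1 + c))) * ∑ i, u i ^ 2)
            * ∏ i, ∏ j ∈ Finset.univ.filter fun j => i < j, |u j - u i|)
        = ∫ v : Fin N → ℝ,
            Real.exp (σ * (v + a σ) e₀ - α * (∑ i, (v + a σ) i) ^ 2
                - (1 / (2 * (1 + c))) * ∑ i, (v + a σ) i ^ 2)
              * ∏ i, ∏ j ∈ Finset.univ.filter fun j => i < j, |(v + a σ) j - (v + a σ) i| :=
          (integral_add_right_eq_self (fun u : Fin N → ℝ =>
            Real.exp (σ * u e₀ - α * (∑ i, u i) ^ 2 - (1 / (2 * (1 + c))) * ∑ i, u i ^ 2)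
              * ∏ i, ∏ j ∈ Finset.univ.filter fun j => i < j, |u j - u i|) (a σ)).symm
      _ = ∫ v : Fin N → ℝ, Real.exp (σ ^ 2 / 2) *
            ((∏ j ∈ Finset.univ.filter fun j : Fin N => e₀ < j, |v j - v e₀ - σ * (1 + c)|) * f v) :=
          integral_congr_ae (Eventually.of_forall fun v => hshift σ v)
      _ = Real.exp (σ ^ 2 / 2) * ∫ v : Fin N → ℝ,
            (∏ j ∈ Finset.univ.filter fun j : Fin N => e₀ < j, |v j - v e₀ - σ * (1 + c)|) * f v :=
          integral_const_mul _ _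
  -- the rescaled integrand
  set G : ℝ → (Fin N → ℝ) → ℝ := fun σ v =>
    (∏ j ∈ Finset.univ.filter fun j : Fin N => e₀ < j, |(v j - v e₀) / ((1 + c) * σ) - 1|) * f v
    with hG
  have hstep2 : ∀ σ : ℝ, 0 < σ →
      (∫ v : Fin N → ℝ,
        (∏ j ∈ Finset.univ.filter fun j : Fin N => e₀ < j, |v j - v e₀ - σ * (1 + c)|) * f v)
      = ((1 + c) * σ) ^ (N - 1) * ∫ v, G σ v := by
    intro σ hσ
    have ht : 0 < (1 + c) * σ := mul_pos hc0 hσ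
    rw [← integral_const_mul]
    apply integral_congr_ae
    apply Eventually.of_forall
    intro v
    beta_reduce
    have hfac : ∀ j : Fin N, |v j - v e₀ - σ * (1 + c)|
        = ((1 + c) * σ) * |(v j - v e₀) / ((1 + c) * σ) - 1| := by
      intro j
      rw [show ((1 + c) * σ) * |(v j - v e₀) / ((1 + c) * σ) - 1|
          = |((1 + c) * σ) * ((v j - v e₀) / ((1 + c) * σ) - 1)| from by
        rw [abs_mul, abs_of_pos ht]]
      congr 1
      field_simp
    rw [Finset.prod_congr rfl (fun j _ => hfac j), Finset.prod_mul_distrib,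
      Finset.prod_const, hcard]
    simp only [hG]
    ring
  -- dominating function
  obtain ⟨δ, hδpos, hδ1, hδ2⟩ : ∃ δ : ℝ, 0 < δ ∧ δ ≤ 1 / (2 * (1 + c)) ∧
      δ ≤ 1 / (2 * (1 + c)) + N * α := by
    refine ⟨min (1 / (2 * (1 + c))) (1 / (2 * (1 + c)) + N * α), ?_,
      min_le_left _ _, min_le_right _ _⟩
    apply lt_min
    · exact div_pos one_pos (by linarith)
    · have hkey : 1 / (2 * (1 + c)) + (N:ℝ) * α = 1 / (2 * (1 + c * (1 - (N:ℝ)))) := by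
        rw [hα]
        field_simp
        ring
      rw [hkey]
      exact div_pos one_pos (by linarith)
  set M : ℕ := 2 * N * N + 2 * N with hM
  set bound : (Fin N → ℝ) → ℝ := fun x =>
    (1 + 1 / (1 + c)) ^ N * ∏ i, ((1 + |x i|) ^ M * Real.exp (-δ * x i ^ 2)) with hbound
  have hbound_int : Integrable bound :=
    (Integrable.fintype_prod (f := fun _ : Fin N => fun x : ℝ =>
      (1 + |x|) ^ M * Real.exp (-δ * x ^ 2)) (fun _ => aux_int1D M hδpos)).const_mul _
  -- basic inequalities
  have hfac1 : ∀ (x : Fin N → ℝ) (i : Fin N), (1:ℝ) ≤ 1 + |x i| :=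
    fun x i => le_add_of_nonneg_right (abs_nonneg _)
  have h1le : ∀ (s : Finset (Fin N)) (x : Fin N → ℝ), (1:ℝ) ≤ ∏ k ∈ s, (1 + |x k|) := by
    intro s x
    calc (1:ℝ) = ∏ _k ∈ s, (1:ℝ) := (Finset.prod_const_one).symm
      _ ≤ ∏ k ∈ s, (1 + |x k|) :=
        Finset.prod_le_prod (fun _ _ => zero_le_one) (fun k _ => hfac1 x k)
  have hB1 : ∀ x : Fin N → ℝ, (1:ℝ) ≤ ∏ k, (1 + |x k|) := fun x => h1le Finset.univ x
  have hBfac : ∀ (x : Fin N → ℝ) (i : Fin N), 1 + |x i| ≤ ∏ k, (1 + |x k|) := by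
    intro x i
    rw [← Finset.mul_prod_erase Finset.univ _ (Finset.mem_univ i)]
    nth_rewrite 1 [← mul_one (1 + |x i|)]
    exact mul_le_mul_of_nonneg_left (h1le _ x) (by positivity)
  have habs : ∀ (y z : ℝ), |y - z| ≤ |y| + |z| := by
    intro y z
    calc |y - z| = |y + -z| := by rw [sub_eq_add_neg]
      _ ≤ |y| + |-z| := abs_add_le _ _
      _ = |y| + |z| := by rw [abs_neg]
  have hpair : ∀ (x : Fin N → ℝ) (i j : Fin N), |x j - x i| ≤ (∏ k, (1 + |x k|)) ^ 2 := by
    intro x i j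
    have h1 := habs (x j) (x i)
    calc |x j - x i| ≤ (1 + |x j|) * (1 + |x i|) := by
          nlinarith [abs_nonneg (x j), abs_nonneg (x i)]
      _ ≤ (∏ k, (1 + |x k|)) * (∏ k, (1 + |x k|)) :=
          mul_le_mul (hBfac x j) (hBfac x i) (by positivity)
            (le_trans zero_le_one (hB1 x))
      _ = (∏ k, (1 + |x k|)) ^ 2 := (sq _).symm
  have hpair1 : ∀ (x : Fin N → ℝ) (j : Fin N),
      1 + |x j - x e₀| ≤ (∏ k, (1 + |x k|)) ^ 2 := by
    intro x j
    have h1 := habs (x j) (x e₀)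
    calc 1 + |x j - x e₀| ≤ (1 + |x j|) * (1 + |x e₀|) := by
          nlinarith [abs_nonneg (x j), abs_nonneg (x e₀)]
      _ ≤ (∏ k, (1 + |x k|)) * (∏ k, (1 + |x k|)) :=
          mul_le_mul (hBfac x j) (hBfac x e₀) (by positivity)
            (le_trans zero_le_one (hB1 x))
      _ = (∏ k, (1 + |x k|)) ^ 2 := (sq _).symm
  have hexp_le : ∀ x : Fin N → ℝ,
      Real.exp (-α * (∑ i, x i) ^ 2 - (1 / (2 * (1 + c))) * ∑ i, x i ^ 2)
        ≤ ∏ i, Real.exp (-δ * x i ^ 2) := by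
    intro x
    rw [← Real.exp_sum]
    apply Real.exp_le_exp.2
    have hS : (∑ i, x i) ^ 2 ≤ (N:ℝ) * ∑ i, x i ^ 2 := by
      have h := sq_sum_le_card_mul_sum_sq (s := (Finset.univ : Finset (Fin N))) (f := x)
      simpa using h
    have hT : 0 ≤ ∑ i, x i ^ 2 := Finset.sum_nonneg fun i _ => sq_nonneg _
    have hsum : ∑ i, -δ * x i ^ 2 = -δ * ∑ i, x i ^ 2 := by rw [← Finset.mul_sum]
    rw [hsum]
    rcases le_or_gt 0 α with h0 | h0
    · have k2 : δ * (∑ i, x i ^ 2) ≤ 1 / (2 * (1 + c)) * ∑ i, x i ^ 2 :=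
        mul_le_mul_of_nonneg_right hδ1 hT
      have k3 : 0 ≤ α * (∑ i, x i) ^ 2 := mul_nonneg h0 (sq_nonneg _)
      linarith
    · have k1 : α * ((N:ℝ) * ∑ i, x i ^ 2) ≤ α * (∑ i, x i) ^ 2 :=
        mul_le_mul_of_nonpos_left hS h0.le
      have k2 : δ * (∑ i, x i ^ 2) ≤ (1 / (2 * (1 + c)) + (N:ℝ) * α) * ∑ i, x i ^ 2 :=
        mul_le_mul_of_nonneg_right hδ2 hT
      have k4 : (1 / (2 * (1 + c)) + (N:ℝ) * α) * (∑ i, x i ^ 2)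
          = 1 / (2 * (1 + c)) * (∑ i, x i ^ 2) + α * ((N:ℝ) * ∑ i, x i ^ 2) := by ring
      linarith
  have hvdm_le : ∀ x : Fin N → ℝ,
      (∏ i ∈ Finset.univ.filter fun i : Fin N => e₀ < i,
        ∏ j ∈ Finset.univ.filter fun j => i < j, |x j - x i|)
      ≤ (∏ k, (1 + |x k|)) ^ (2 * N * N) := by
    intro x
    have hB2 : (1:ℝ) ≤ (∏ k, (1 + |x k|)) ^ 2 := one_le_pow₀ (hB1 x)
    calc (∏ i ∈ Finset.univ.filter fun i : Fin N => e₀ < i,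
            ∏ j ∈ Finset.univ.filter fun j => i < j, |x j - x i|)
        ≤ ∏ i ∈ Finset.univ.filter fun i : Fin N => e₀ < i, (∏ k, (1 + |x k|)) ^ (2 * N) := by
          apply Finset.prod_le_prod
          · intro i _
            exact Finset.prod_nonneg fun j _ => abs_nonneg _
          · intro i _
            calc ∏ j ∈ Finset.univ.filter fun j => i < j, |x j - x i|
                ≤ ∏ j ∈ Finset.univ.filter fun j => i < j, (∏ k, (1 + |x k|)) ^ 2 :=
                  Finset.prod_le_prod (fun j _ => abs_nonneg _) (fun j _ => hpair x i j)
              _ = ((∏ k, (1 + |x k|)) ^ 2) ^ (Finset.univ.filter fun j => i < j).card :=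
                  Finset.prod_const _
              _ ≤ ((∏ k, (1 + |x k|)) ^ 2) ^ N := by
                  apply pow_le_pow_right₀ hB2
                  exact le_trans (Finset.card_filter_le _ _) (le_of_eq (by simp))
              _ = (∏ k, (1 + |x k|)) ^ (2 * N) := by rw [← pow_mul]
      _ = ((∏ k, (1 + |x k|)) ^ (2 * N)) ^ (Finset.univ.filter fun i : Fin N => e₀ < i).card :=
          Finset.prod_const _
      _ ≤ ((∏ k, (1 + |x k|)) ^ (2 * N)) ^ N := by
          apply pow_le_pow_right₀ (one_le_pow₀ (hB1 x))
          rw [hcard]; omega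
      _ = (∏ k, (1 + |x k|)) ^ (2 * N * N) := by rw [← pow_mul]
  have hshiftprod_le : ∀ σ : ℝ, 1 ≤ σ → ∀ x : Fin N → ℝ,
      (∏ j ∈ Finset.univ.filter fun j : Fin N => e₀ < j, |(x j - x e₀) / ((1 + c) * σ) - 1|)
      ≤ (1 + 1 / (1 + c)) ^ N * (∏ k, (1 + |x k|)) ^ (2 * N) := by
    intro σ hσ x
    have htpos : 0 < (1 + c) * σ := mul_pos hc0 (by linarith)
    have ht1 : 1 + c ≤ (1 + c) * σ := by nlinarith
    have hB2 : (1:ℝ) ≤ (∏ k, (1 + |x k|)) ^ 2 := one_le_pow₀ (hB1 x)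
    have hC1 : (1:ℝ) ≤ 1 + 1 / (1 + c) := by
      have : 0 < 1 / (1 + c) := by positivity
      linarith
    have hfacb : ∀ j : Fin N, |(x j - x e₀) / ((1 + c) * σ) - 1|
        ≤ (1 + 1 / (1 + c)) * (∏ k, (1 + |x k|)) ^ 2 := by
      intro j
      have h1 : |(x j - x e₀) / ((1 + c) * σ) - 1| ≤ |x j - x e₀| / ((1 + c) * σ) + 1 := by
        calc |(x j - x e₀) / ((1 + c) * σ) - 1|
            ≤ |(x j - x e₀) / ((1 + c) * σ)| + |(1:ℝ)| := habs _ _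
          _ = |x j - x e₀| / ((1 + c) * σ) + 1 := by
              rw [abs_div, abs_of_pos htpos, abs_one]
      have h2 : |x j - x e₀| / ((1 + c) * σ) ≤ |x j - x e₀| / (1 + c) := by
        gcongr
      have h3 : |x j - x e₀| / (1 + c) + 1 ≤ (1 + 1 / (1 + c)) * (1 + |x j - x e₀|) := by
        have h0 : 0 ≤ |x j - x e₀| := abs_nonneg _
        have hinv : 0 < 1 / (1 + c) := by positivity
        have hdiv : |x j - x e₀| / (1 + c) = |x j - x e₀| * (1 / (1 + c)) := by ring
        rw [hdiv]
        nlinarith [mul_nonneg h0 hinv.le]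
      calc |(x j - x e₀) / ((1 + c) * σ) - 1| ≤ |x j - x e₀| / (1 + c) + 1 := by linarith
        _ ≤ (1 + 1 / (1 + c)) * (1 + |x j - x e₀|) := h3
        _ ≤ (1 + 1 / (1 + c)) * (∏ k, (1 + |x k|)) ^ 2 :=
            mul_le_mul_of_nonneg_left (hpair1 x j) (by linarith)
    have hbase : (1:ℝ) ≤ (1 + 1 / (1 + c)) * (∏ k, (1 + |x k|)) ^ 2 := by nlinarith
    calc (∏ j ∈ Finset.univ.filter fun j : Fin N => e₀ < j, |(x j - x e₀) / ((1 + c) * σ) - 1|)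
        ≤ ∏ j ∈ Finset.univ.filter fun j : Fin N => e₀ < j,
            ((1 + 1 / (1 + c)) * (∏ k, (1 + |x k|)) ^ 2) :=
          Finset.prod_le_prod (fun j _ => abs_nonneg _) (fun j _ => hfacb j)
      _ = ((1 + 1 / (1 + c)) * (∏ k, (1 + |x k|)) ^ 2)
            ^ (Finset.univ.filter fun i : Fin N => e₀ < i).card := Finset.prod_const _
      _ ≤ ((1 + 1 / (1 + c)) * (∏ k, (1 + |x k|)) ^ 2) ^ N := by
          apply pow_le_pow_right₀ hbase
          rw [hcard]; omega
      _ = (1 + 1 / (1 + c)) ^ N * ((∏ k, (1 + |x k|)) ^ 2) ^ N := mul_pow _ _ _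
      _ = (1 + 1 / (1 + c)) ^ N * (∏ k, (1 + |x k|)) ^ (2 * N) := by rw [← pow_mul]
  have hfnonneg : ∀ x, 0 ≤ f x := by
    intro x
    exact mul_nonneg (Real.exp_pos _).le
      (Finset.prod_nonneg fun i _ => Finset.prod_nonneg fun j _ => abs_nonneg _)
  have hbound_eq : ∀ x : Fin N → ℝ, bound x
      = (1 + 1 / (1 + c)) ^ N * ((∏ k, (1 + |x k|)) ^ M * ∏ i, Real.exp (-δ * x i ^ 2)) := by
    intro x
    simp only [hbound]
    rw [Finset.prod_mul_distrib, Finset.prod_pow]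
  have hone_le_C : (1:ℝ) ≤ (1 + 1 / (1 + c)) ^ N := by
    apply one_le_pow₀
    have : 0 < 1 / (1 + c) := by positivity
    linarith
  have hf_le : ∀ x, f x ≤ bound x := by
    intro x
    have hBM : (∏ k, (1 + |x k|)) ^ (2 * N * N) ≤ (∏ k, (1 + |x k|)) ^ M := by
      apply pow_le_pow_right₀ (hB1 x)
      rw [hM]; omega
    calc f x = Real.exp (-α * (∑ i, x i) ^ 2 - (1 / (2 * (1 + c))) * ∑ i, x i ^ 2) *
          ∏ i ∈ Finset.univ.filter fun i : Fin N => e₀ < i,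
            ∏ j ∈ Finset.univ.filter fun j => i < j, |x j - x i| := by simp only [hf]
      _ ≤ (∏ i, Real.exp (-δ * x i ^ 2)) * (∏ k, (1 + |x k|)) ^ (2 * N * N) :=
          mul_le_mul (hexp_le x) (hvdm_le x)
            (Finset.prod_nonneg fun i _ => Finset.prod_nonneg fun j _ => abs_nonneg _)
            (Finset.prod_nonneg fun i _ => (Real.exp_pos _).le)
      _ ≤ (∏ i, Real.exp (-δ * x i ^ 2)) * (∏ k, (1 + |x k|)) ^ M :=
          mul_le_mul_of_nonneg_left hBM (Finset.prod_nonneg fun i _ => (Real.exp_pos _).le)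
      _ = (∏ k, (1 + |x k|)) ^ M * ∏ i, Real.exp (-δ * x i ^ 2) := mul_comm _ _
      _ ≤ (1 + 1 / (1 + c)) ^ N * ((∏ k, (1 + |x k|)) ^ M * ∏ i, Real.exp (-δ * x i ^ 2)) := by
          apply le_mul_of_one_le_left _ hone_le_C
          positivity
      _ = bound x := (hbound_eq x).symm
  have hG_nonneg : ∀ σ x, 0 ≤ G σ x := by
    intro σ x
    exact mul_nonneg (Finset.prod_nonneg fun j _ => abs_nonneg _) (hfnonneg x)
  have hG_le : ∀ σ : ℝ, 1 ≤ σ → ∀ x, G σ x ≤ bound x := by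
    intro σ hσ x
    have hMe : 2 * N + 2 * N * N = M := by rw [hM]; ring
    calc G σ x
        = (∏ j ∈ Finset.univ.filter fun j : Fin N => e₀ < j, |(x j - x e₀) / ((1 + c) * σ) - 1|) *
          (Real.exp (-α * (∑ i, x i) ^ 2 - (1 / (2 * (1 + c))) * ∑ i, x i ^ 2) *
            ∏ i ∈ Finset.univ.filter fun i : Fin N => e₀ < i,
              ∏ j ∈ Finset.univ.filter fun j => i < j, |x j - x i|) := by simp only [hG, hf]
      _ ≤ ((1 + 1 / (1 + c)) ^ N * (∏ k, (1 + |x k|)) ^ (2 * N)) *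
          ((∏ i, Real.exp (-δ * x i ^ 2)) * (∏ k, (1 + |x k|)) ^ (2 * N * N)) := by
          apply mul_le_mul (hshiftprod_le σ hσ x)
          · exact mul_le_mul (hexp_le x) (hvdm_le x)
              (Finset.prod_nonneg fun i _ => Finset.prod_nonneg fun j _ => abs_nonneg _)
              (Finset.prod_nonneg fun i _ => (Real.exp_pos _).le)
          · apply mul_nonneg (Real.exp_pos _).le
            exact Finset.prod_nonneg fun i _ => Finset.prod_nonneg fun j _ => abs_nonneg _
          · positivity
      _ = (1 + 1 / (1 + c)) ^ N *
          ((∏ k, (1 + |x k|)) ^ (2 * N) * (∏ k, (1 + |x k|)) ^ (2 * N * N) *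
            ∏ i, Real.exp (-δ * x i ^ 2)) := by ring
      _ = (1 + 1 / (1 + c)) ^ N * ((∏ k, (1 + |x k|)) ^ M * ∏ i, Real.exp (-δ * x i ^ 2)) := by
          rw [← pow_add, hMe]
      _ = bound x := (hbound_eq x).symm
  have hf_cont : Continuous f := by
    simp only [hf]
    apply Continuous.mul
    · apply Real.continuous_exp.comp
      have h1 : Continuous fun v : Fin N → ℝ => ∑ i, v i :=
        continuous_finset_sum _ fun i _ => continuous_apply i
      have h2 : Continuous fun v : Fin N → ℝ => ∑ i, v i ^ 2 :=
        continuous_finset_sum _ fun i _ => (continuous_apply i).pow 2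
      exact (continuous_const.mul (h1.pow 2)).sub (continuous_const.mul h2)
    · apply continuous_finset_prod
      intro i _
      apply continuous_finset_prod
      intro j _
      exact ((continuous_apply j).sub (continuous_apply i)).abs
  have hG_meas : ∀ σ : ℝ, AEStronglyMeasurable (G σ) volume := by
    intro σ
    apply Continuous.aestronglyMeasurable
    simp only [hG]
    apply Continuous.mul
    · apply continuous_finset_prod
      intro j _
      exact ((((continuous_apply j).sub (continuous_apply e₀)).div_const _).sub
        continuous_const).abs
    · exact hf_cont
  have hG_tendsto : ∀ x : Fin N → ℝ, Tendsto (fun σ => G σ x) atTop (nhds (f x)) := by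
    intro x
    have key : ∀ j ∈ Finset.univ.filter fun j : Fin N => e₀ < j,
        Tendsto (fun σ : ℝ => |(x j - x e₀) / ((1 + c) * σ) - 1|) atTop (nhds 1) := by
      intro j _
      have h2 : Tendsto (fun σ : ℝ => (x j - x e₀) / ((1 + c) * σ)) atTop (nhds 0) := by
        have heq : (fun σ : ℝ => (x j - x e₀) / ((1 + c) * σ))
            = fun σ => ((x j - x e₀) / (1 + c)) * σ⁻¹ := by
          funext σ
          rw [← div_div, div_eq_mul_inv]
        rw [heq]
        simpa using tendsto_inv_atTop_zero.const_mul ((x j - x e₀) / (1 + c))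
      have h3 := (continuous_abs.tendsto ((0:ℝ) - 1)).comp (h2.sub_const 1)
      simp only [Function.comp_def] at h3
      simpa using h3
    have h1 := tendsto_finset_prod (Finset.univ.filter fun j : Fin N => e₀ < j) key
    have h2 := h1.mul_const (f x)
    simp only [Finset.prod_const_one, one_mul] at h2
    exact h2
  have hDCT : Tendsto (fun σ => ∫ x, G σ x) atTop (nhds (∫ x, f x)) := by
    apply tendsto_integral_filter_of_dominated_convergence bound
      (Eventually.of_forall fun σ => hG_meas σ)
    · filter_upwards [eventually_ge_atTop (1:ℝ)] with σ hσ
      filter_upwards with x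
      rw [Real.norm_eq_abs, abs_of_nonneg (hG_nonneg σ x)]
      exact hG_le σ hσ x
    · exact hbound_int
    · exact Eventually.of_forall fun x => hG_tendsto x
  have hf_int : Integrable f := by
    apply hbound_int.mono' hf_cont.aestronglyMeasurable
    filter_upwards with x
    rw [Real.norm_eq_abs, abs_of_nonneg (hfnonneg x)]
    exact hf_le x
  have hJpos : 0 < J := by
    rw [hJf]
    rw [integral_pos_iff_support_of_nonneg (fun x => hfnonneg x) hf_int]
    by_contra hcon
    push_neg at hcon
    have h3 : volume (Function.support f) = 0 := le_antisymm hcon zero_le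
    have hsub : (Function.support f)ᶜ ⊆
        ⋃ (i : Fin N) (j : Fin N) (_ : i ≠ j), {x : Fin N → ℝ | x j - x i = 0} := by
      intro x hx
      simp only [Set.mem_compl_iff, Function.mem_support, not_not] at hx
      have hprod0 : (∏ i ∈ Finset.univ.filter fun i : Fin N => e₀ < i,
          ∏ j ∈ Finset.univ.filter fun j => i < j, |x j - x i|) = 0 := by
        rcases mul_eq_zero.mp hx with h | h
        · exact absurd h (Real.exp_ne_zero _)
        · exact h
      obtain ⟨i, hi, h0⟩ := Finset.prod_eq_zero_iff.mp hprod0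
      obtain ⟨j, hj, h0'⟩ := Finset.prod_eq_zero_iff.mp h0
      have hij : i ≠ j := ne_of_lt (Finset.mem_filter.mp hj).2
      exact Set.mem_iUnion.2 ⟨i, Set.mem_iUnion.2 ⟨j, Set.mem_iUnion.2
        ⟨hij, abs_eq_zero.mp h0'⟩⟩⟩
    have hnull : volume (⋃ (i : Fin N) (j : Fin N) (_ : i ≠ j),
        {x : Fin N → ℝ | x j - x i = 0}) = 0 := by
      apply measure_iUnion_null
      intro i
      apply measure_iUnion_null
      intro j
      apply measure_iUnion_null
      intro hij
      exact aux_hyperplane_null hij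
    have h2 : volume ((Function.support f)ᶜ) = 0 := measure_mono_null hsub hnull
    have h1 : volume (Set.univ : Set (Fin N → ℝ))
        ≤ volume (Function.support f) + volume ((Function.support f)ᶜ) := by
      rw [← Set.union_compl_self (Function.support f)]
      exact measure_union_le _ _
    have h4 : (0 : ENNReal) < volume (Set.univ : Set (Fin N → ℝ)) :=
      isOpen_univ.measure_pos volume Set.univ_nonempty
    have h5 : volume (Set.univ : Set (Fin N → ℝ)) = 0 :=
      le_antisymm (by simpa [h2, h3] using h1) zero_le
    exact h4.ne' h5
  have hfinal : ∀ᶠ σ : ℝ in atTop,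
      I σ / ((1 + c) ^ (N - 1) * σ ^ (N - 1) * Real.exp (σ ^ 2 / 2) * J)
      = (∫ x, G σ x) / J := by
    filter_upwards [eventually_gt_atTop (0:ℝ)] with σ hσ
    rw [hstep1 σ, hstep2 σ hσ, mul_pow]
    have h1 : ((1 + c) : ℝ) ^ (N - 1) ≠ 0 := pow_ne_zero _ hc0.ne'
    have h2 : σ ^ (N - 1) ≠ 0 := pow_ne_zero _ hσ.ne'
    have h3 : Real.exp (σ ^ 2 / 2) ≠ 0 := Real.exp_ne_zero _
    field_simp
  have hlim : Tendsto (fun σ => (∫ x, G σ x) / J) atTop (nhds 1) := by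
    have h := hDCT.div_const J
    rw [← hJf, div_self hJpos.ne'] at h
    exact h
  exact hlim.congr' (hfinal.mono fun σ h => h.symm)
end

section
/- Let N ≥ 1 and k ≥ 2 be integers, fix indices j_1,…,j_k ∈ {1,…,N}, and for orthogonal matrices O^{(1)},…,O^{(k)} ∈ O_N(ℝ) set W = ∑_{1≤r<l≤k} ((ᵗO^{(r)} O^{(l)})_{j_r, j_l})² and T = (ᵗO^{(1)}O^{(2)})_{j_1,j_2} (ᵗO^{(2)}O^{(3)})_{j_2,j_3} ⋯ (ᵗO^{(k−1)}O^{(k)})_{j_{k−1},j_k} (ᵗO^{(k)}O^{(1)})_{j_k,j_1}. Define I(s) = ∫_{O_N(ℝ)^k} T e^{sW} dO^{(1)}⋯dO^{(k)}, the integral being with respect to the product of Haar probability measures. Then I(s) > 0 for all s large enough and lim_{s→∞} (1/s) ln I(s) = k(k−1)/2. -/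
open MeasureTheory Matrix Finset Filter

instance matrixMeasurableSpace {m n α : Type*} [MeasurableSpace α] :
    MeasurableSpace (Matrix m n α) :=
  (inferInstance : MeasurableSpace (m → n → α))

section Helpers

open TopologicalSpace



lemma prodDiff {ι : Type*} (s : Finset ι) (f g : ι → ℝ)
    (hf : ∀ i ∈ s, |f i| ≤ 1) (hg : ∀ i ∈ s, |g i| ≤ 1) :
    |∏ i ∈ s, f i - ∏ i ∈ s, g i| ≤ ∑ i ∈ s, |f i - g i| := by
  classical
  induction s using Finset.induction with
  | empty => simp
  | @insert a s' hx ih =>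
    rw [Finset.prod_insert hx, Finset.prod_insert hx, Finset.sum_insert hx]
    have h1 : ∀ i ∈ s', |f i| ≤ 1 := fun i hi => hf i (Finset.mem_insert_of_mem hi)
    have h2 : ∀ i ∈ s', |g i| ≤ 1 := fun i hi => hg i (Finset.mem_insert_of_mem hi)
    have ihs := ih h1 h2
    have hfa := hf a (Finset.mem_insert_self a s')
    have hga := hg a (Finset.mem_insert_self a s')
    have hfp : |∏ i ∈ s', f i| ≤ 1 := by
      rw [Finset.abs_prod]; exact Finset.prod_le_one (fun i _ => abs_nonneg _) (fun i hi => h1 i hi)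
    have hgp : |∏ i ∈ s', g i| ≤ 1 := by
      rw [Finset.abs_prod]; exact Finset.prod_le_one (fun i _ => abs_nonneg _) (fun i hi => h2 i hi)
    calc |f a * ∏ i ∈ s', f i - g a * ∏ i ∈ s', g i|
        = |(f a - g a) * ∏ i ∈ s', f i + g a * (∏ i ∈ s', f i - ∏ i ∈ s', g i)| := by ring_nf
      _ ≤ |(f a - g a) * ∏ i ∈ s', f i| + |g a * (∏ i ∈ s', f i - ∏ i ∈ s', g i)| := abs_add_le _ _
      _ = |f a - g a| * |∏ i ∈ s', f i| + |g a| * |∏ i ∈ s', f i - ∏ i ∈ s', g i| := by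
          rw [abs_mul, abs_mul]
      _ ≤ |f a - g a| * 1 + 1 * (∑ i ∈ s', |f i - g i|) := by
          nlinarith [abs_nonneg (f a - g a), abs_nonneg (g a), hfp, hga, ihs,
            abs_nonneg (∏ i ∈ s', f i - ∏ i ∈ s', g i)]
      _ = |f a - g a| + ∑ i ∈ s', |f i - g i| := by ring

lemma countPairs (k : ℕ) :
    (∑ r : Fin k, ∑ l ∈ Finset.univ.filter fun l => r < l, (1:ℝ)) = (k * (k-1) : ℝ)/2 := by
  classical
  have key : (∑ r : Fin k, ∑ l : Fin k, ((if r < l then (1:ℝ) else 0) + (if l < r then (1:ℝ) else 0) + (if r = l then (1:ℝ) else 0))) = (k*k : ℝ) := by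
    have : ∀ r l : Fin k, ((if r < l then (1:ℝ) else 0) + (if l < r then (1:ℝ) else 0) + (if r = l then (1:ℝ) else 0)) = 1 := by
      intro r l
      rcases lt_trichotomy r l with h | h | h
      · simp [h, h.ne, not_lt.2 h.le, asymm h]
      · simp [h]
      · simp [h, h.ne', not_lt.2 h.le, asymm h]
    simp only [this, Finset.sum_const, Finset.card_univ, Fintype.card_fin, nsmul_eq_mul]
    push_cast; ring
  have e1 : (∑ r : Fin k, ∑ l ∈ Finset.univ.filter fun l => r < l, (1:ℝ))
      = ∑ r : Fin k, ∑ l : Fin k, (if r < l then (1:ℝ) else 0) := by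
    refine Finset.sum_congr rfl fun r _ => ?_
    rw [Finset.sum_filter]
  have e2 : (∑ r : Fin k, ∑ l : Fin k, (if l < r then (1:ℝ) else 0))
      = ∑ r : Fin k, ∑ l : Fin k, (if r < l then (1:ℝ) else 0) := by
    rw [Finset.sum_comm]
  have e3 : (∑ r : Fin k, ∑ l : Fin k, (if r = l then (1:ℝ) else 0)) = (k : ℝ) := by
    simp [Finset.sum_ite_eq]
  simp only [Finset.sum_add_distrib] at key
  rw [e2, e3] at key
  rw [e1]
  linear_combination key / 2

lemma nearMult {N : ℕ} (u0 v w : Fin N → ℝ)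
    (h0 : ∑ i, u0 i ^ 2 = 1) (hv : ∑ i, v i ^ 2 = 1) (hw : ∑ i, w i ^ 2 = 1) :
    ((∑ i, v i * w i) - (∑ i, u0 i * v i) * (∑ i, u0 i * w i)) ^ 2
      ≤ (1 - (∑ i, u0 i * v i) ^ 2) * (1 - (∑ i, u0 i * w i) ^ 2) := by
  set a := ∑ i, u0 i * v i with ha
  set b := ∑ i, u0 i * w i with hb
  have key := Finset.sum_mul_sq_le_sq_mul_sq Finset.univ
    (fun i => v i - a * u0 i) (fun i => w i - b * u0 i)
  have e1 : ∑ i, (v i - a * u0 i) * (w i - b * u0 i) = (∑ i, v i * w i) - a * b := by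
    have : ∀ i, (v i - a * u0 i) * (w i - b * u0 i)
        = v i * w i - b * (u0 i * v i) - a * (u0 i * w i) + a * b * (u0 i ^ 2) := by
      intro i; ring
    rw [Finset.sum_congr rfl fun i _ => this i]
    rw [Finset.sum_add_distrib, Finset.sum_sub_distrib, Finset.sum_sub_distrib,
      ← Finset.mul_sum, ← Finset.mul_sum, ← Finset.mul_sum, h0, ← ha, ← hb]
    ring
  have e2 : ∑ i, (v i - a * u0 i) ^ 2 = 1 - a ^ 2 := by
    have : ∀ i, (v i - a * u0 i) ^ 2 = v i ^ 2 - 2 * a * (u0 i * v i) + a ^ 2 * u0 i ^ 2 := by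
      intro i; ring
    rw [Finset.sum_congr rfl fun i _ => this i]
    rw [Finset.sum_add_distrib, Finset.sum_sub_distrib, ← Finset.mul_sum, ← Finset.mul_sum,
      h0, hv, ← ha]
    ring
  have e3 : ∑ i, (w i - b * u0 i) ^ 2 = 1 - b ^ 2 := by
    have : ∀ i, (w i - b * u0 i) ^ 2 = w i ^ 2 - 2 * b * (u0 i * w i) + b ^ 2 * u0 i ^ 2 := by
      intro i; ring
    rw [Finset.sum_congr rfl fun i _ => this i]
    rw [Finset.sum_add_distrib, Finset.sum_sub_distrib, ← Finset.mul_sum, ← Finset.mul_sum,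
      h0, hw, ← hb]
    ring
  rw [e1, e2, e3] at key
  exact key

lemma TlowerBound {N k : ℕ} (hk : 2 ≤ k) (u : Fin k → Fin N → ℝ)
    (hunit : ∀ r, ∑ i, u r i ^ 2 = 1) (η : ℝ) (hη0 : 0 ≤ η) (hη1 : η ≤ 1)
    (hpair : ∀ r l : Fin k, r < l → 1 - η ≤ (∑ i, u r i * u l i) ^ 2) :
    1 - 2 * k * η ≤ ∏ r : Fin k, ∑ i, u r i * u (r + ⟨1, by omega⟩) i := by
  haveI : NeZero k := ⟨by omega⟩
  set c : Fin k → Fin k → ℝ := fun r l => ∑ i, u r i * u l i with hc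
  have csymm : ∀ r l, c r l = c l r := by
    intro r l; simp only [hc]
    exact Finset.sum_congr rfl fun i _ => mul_comm _ _
  have crr : ∀ r, c r r = 1 := by
    intro r; simp only [hc]
    rw [← hunit r]; exact Finset.sum_congr rfl fun i _ => (sq (u r i)).symm
  have cs : ∀ r l, (c r l) ^ 2 ≤ 1 := by
    intro r l
    have := Finset.sum_mul_sq_le_sq_mul_sq Finset.univ (u r) (u l)
    rw [hunit r, hunit l] at this
    simpa [hc] using this
  have habs : ∀ r l, |c r l| ≤ 1 := by
    intro r l; rw [abs_le]; constructor <;> nlinarith [cs r l]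
  have hzero : ∀ r : Fin k, r ≠ 0 → 1 - η ≤ (c 0 r)^2 := by
    intro r hr
    exact hpair 0 r ((Fin.zero_le r).lt_of_ne (Ne.symm hr))
  set one : Fin k := ⟨1, by omega⟩ with hone
  set f : Fin k → ℝ := fun r => c r (r + one) with hf
  set g : Fin k → ℝ := fun r => c 0 r * c 0 (r + one) with hg
  have hfg : ∀ r, |f r - g r| ≤ η := by
    intro r
    by_cases h0 : r = 0
    · simp only [hf, hg, h0, crr, one_mul]
      simpa using hη0
    by_cases h1 : r + one = 0
    · simp only [hf, hg, h1, crr, mul_one]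
      rw [csymm r 0]
      simpa using hη0
    · have key := nearMult (u 0) (u r) (u (r + one)) (hunit 0) (hunit r) (hunit (r + one))
      have ha : 1 - η ≤ (c 0 r)^2 := hzero r h0
      have hb : 1 - η ≤ (c 0 (r + one))^2 := hzero _ h1
      have ha' : (c 0 r)^2 ≤ 1 := cs _ _
      have hb' : (c 0 (r + one))^2 ≤ 1 := cs _ _
      have key' : (c r (r+one) - c 0 r * c 0 (r+one))^2 ≤ (1 - (c 0 r)^2) * (1 - (c 0 (r+one))^2) := by
        simpa [hc] using key
      have hsq : (f r - g r)^2 ≤ η^2 := by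
        simp only [hf, hg]
        nlinarith
      rw [abs_le]; constructor <;> nlinarith [hsq]
  have hfabs : ∀ r, |f r| ≤ 1 := fun r => habs _ _
  have hgabs : ∀ r, |g r| ≤ 1 := by
    intro r
    simp only [hg, abs_mul]
    calc |c 0 r| * |c 0 (r + one)| ≤ 1 * 1 :=
      mul_le_mul (habs _ _) (habs _ _) (abs_nonneg _) zero_le_one
    _ = 1 := by ring
  have hdiff : |∏ r, f r - ∏ r, g r| ≤ (k : ℝ) * η := by
    calc |∏ r, f r - ∏ r, g r| ≤ ∑ r, |f r - g r| :=
          prodDiff Finset.univ f g (fun r _ => hfabs r) (fun r _ => hgabs r)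
      _ ≤ ∑ _r : Fin k, η := Finset.sum_le_sum fun r _ => hfg r
      _ = (k : ℝ) * η := by simp [mul_comm]
  have hprodg : (1 : ℝ) - k * η ≤ ∏ r, g r := by
    have e : ∏ r, g r = (∏ r, c 0 r) ^ 2 := by
      simp only [hg]
      rw [Finset.prod_mul_distrib]
      have : ∏ r : Fin k, c 0 (r + one) = ∏ r : Fin k, c 0 r :=
        Fintype.prod_equiv (Equiv.addRight one) (fun r => c 0 (r + one)) (fun r => c 0 r)
          (fun x => rfl)
      rw [this]; ring
    have e2 : (∏ r : Fin k, c 0 r) ^ 2 = ∏ r : Fin k, (c 0 r) ^ 2 := by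
      rw [← Finset.prod_pow]
    have hge : ∏ r : Fin k, (1 - η) ≤ ∏ r : Fin k, (c 0 r)^2 := by
      apply Finset.prod_le_prod (fun r _ => by linarith) (fun r _ => ?_)
      by_cases h0 : r = 0
      · subst h0; rw [crr]; nlinarith
      · exact hzero r h0
    have hbern : (1 : ℝ) - k * η ≤ (1 - η)^k := by
      have := one_add_mul_le_pow (a := -η) (by linarith) k
      simpa [sub_eq_add_neg, mul_comm] using this
    have : ∏ r : Fin k, (1 - η) = (1-η)^k := by simp
    rw [e, e2]
    calc (1:ℝ) - k * η ≤ (1-η)^k := hbern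
      _ = ∏ r : Fin k, (1 - η) := this.symm
      _ ≤ _ := hge
  have final : 1 - 2 * k * η ≤ ∏ r, f r := by
    have h1 : ∏ r, g r - ∏ r, f r ≤ (k:ℝ) * η := by
      have := abs_le.1 hdiff
      linarith [this.1]
    linarith
  exact final



lemma pairFromW {N k : ℕ} (u : Fin k → Fin N → ℝ)
    (hunit : ∀ r, ∑ i, u r i ^ 2 = 1) (η : ℝ)
    (h : (k * (k-1) : ℝ)/2 - η ≤ ∑ r, ∑ l ∈ Finset.univ.filter fun l => r < l,
      (∑ i, u r i * u l i)^2) :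
    ∀ r l : Fin k, r < l → 1 - η ≤ (∑ i, u r i * u l i)^2 := by
  intro r₀ l₀ hrl
  set c : Fin k → Fin k → ℝ := fun r l => ∑ i, u r i * u l i with hc
  have cs : ∀ r l, (c r l) ^ 2 ≤ 1 := by
    intro r l
    have := Finset.sum_mul_sq_le_sq_mul_sq Finset.univ (u r) (u l)
    rw [hunit r, hunit l] at this
    simpa [hc] using this
  have key : ∑ r, ∑ l ∈ Finset.univ.filter fun l => r < l, (1 - (c r l)^2)
      = (k * (k-1) : ℝ)/2 - ∑ r, ∑ l ∈ Finset.univ.filter (fun l => r < l), (c r l)^2 := by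
    rw [← countPairs k]
    rw [← Finset.sum_sub_distrib]
    refine Finset.sum_congr rfl fun r _ => ?_
    rw [← Finset.sum_sub_distrib]
  have single : 1 - (c r₀ l₀)^2 ≤ ∑ r, ∑ l ∈ Finset.univ.filter fun l => r < l, (1 - (c r l)^2) := by
    have inner_nonneg : ∀ r, 0 ≤ ∑ l ∈ Finset.univ.filter (fun l => r < l), (1 - (c r l)^2) :=
      fun r => Finset.sum_nonneg fun l _ => by linarith [cs r l]
    have step1 : 1 - (c r₀ l₀)^2 ≤ ∑ l ∈ Finset.univ.filter (fun l => r₀ < l), (1 - (c r₀ l)^2) :=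
      Finset.single_le_sum (f := fun l => 1 - (c r₀ l)^2) (fun l _ => by show (0:ℝ) ≤ 1 - (c r₀ l)^2; linarith [cs r₀ l])
        (Finset.mem_filter.2 ⟨Finset.mem_univ l₀, hrl⟩)
    exact step1.trans (Finset.single_le_sum (fun r _ => inner_nonneg r) (Finset.mem_univ r₀))
  have : 1 - (c r₀ l₀)^2 ≤ η := by
    rw [key] at single
    have h2 : ∑ r, ∑ l ∈ Finset.univ.filter (fun l => r < l), (c r l)^2
        ≥ (k * (k-1) : ℝ)/2 - η := h
    linarith
  linarith

lemma WtotalUpper {N k : ℕ} (u : Fin k → Fin N → ℝ)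
    (hunit : ∀ r, ∑ i, u r i ^ 2 = 1) :
    (∑ r, ∑ l ∈ Finset.univ.filter fun l => r < l, (∑ i, u r i * u l i)^2)
      ≤ (k * (k-1) : ℝ)/2 := by
  rw [← countPairs k]
  refine Finset.sum_le_sum fun r _ => Finset.sum_le_sum fun l _ => ?_
  have := Finset.sum_mul_sq_le_sq_mul_sq Finset.univ (u r) (u l)
  rw [hunit r, hunit l] at this
  simpa using this

lemma innerLarge {N : ℕ} (u v : Fin N → ℝ) (i₀ : Fin N)
    (hu : ∑ i, u i ^ 2 = 1) (hv : ∑ i, v i ^ 2 = 1)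
    (δ : ℝ) (hδ0 : 0 ≤ δ) (hδ1 : δ ≤ 1)
    (hu0 : 1 - δ ≤ u i₀) (hv0 : 1 - δ ≤ v i₀) :
    1 - 4 * δ ≤ ∑ i, u i * v i := by
  have hsplitu : u i₀ ^ 2 + ∑ i ∈ Finset.univ.erase i₀, u i ^ 2 = 1 := by
    rw [Finset.add_sum_erase _ (fun i => u i ^ 2) (Finset.mem_univ i₀)]; exact hu
  have hsplitv : v i₀ ^ 2 + ∑ i ∈ Finset.univ.erase i₀, v i ^ 2 = 1 := by
    rw [Finset.add_sum_erase _ (fun i => v i ^ 2) (Finset.mem_univ i₀)]; exact hv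
  have hsplit : ∑ i, u i * v i = u i₀ * v i₀ + ∑ i ∈ Finset.univ.erase i₀, u i * v i := by
    rw [Finset.add_sum_erase _ (fun i => u i * v i) (Finset.mem_univ i₀)]
  set R := ∑ i ∈ Finset.univ.erase i₀, u i * v i with hR
  have hcs := Finset.sum_mul_sq_le_sq_mul_sq (Finset.univ.erase i₀) u v
  have hru : ∑ i ∈ Finset.univ.erase i₀, u i ^ 2 = 1 - u i₀ ^ 2 := by linarith
  have hrv : ∑ i ∈ Finset.univ.erase i₀, v i ^ 2 = 1 - v i₀ ^ 2 := by linarith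
  rw [hru, hrv, ← hR] at hcs
  have hu1 : u i₀ ≤ 1 := by
    nlinarith [Finset.sum_nonneg (fun i (_ : i ∈ Finset.univ.erase i₀) => sq_nonneg (u i)), hsplitu]
  have hv1 : v i₀ ≤ 1 := by
    nlinarith [Finset.sum_nonneg (fun i (_ : i ∈ Finset.univ.erase i₀) => sq_nonneg (v i)), hsplitv]
  have haa : 1 - u i₀ ^ 2 ≤ 2 * δ := by nlinarith
  have hbb : 1 - v i₀ ^ 2 ≤ 2 * δ := by nlinarith
  have hna : 0 ≤ 1 - u i₀ ^ 2 := by nlinarith [Finset.sum_nonneg (fun i (_ : i ∈ Finset.univ.erase i₀) => sq_nonneg (u i)), hru]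
  have hnb : 0 ≤ 1 - v i₀ ^ 2 := by nlinarith [Finset.sum_nonneg (fun i (_ : i ∈ Finset.univ.erase i₀) => sq_nonneg (v i)), hrv]
  have hcs2 : R ^ 2 ≤ (2*δ) * (2*δ) := by nlinarith [mul_le_mul haa hbb hnb (by linarith : (0:ℝ) ≤ 2*δ)]
  have hRlow : -(2*δ) ≤ R := by nlinarith [sq_nonneg (R + 2*δ)]
  rw [hsplit]
  nlinarith [mul_nonneg (by linarith : (0:ℝ) ≤ u i₀ - (1-δ)) (by linarith : (0:ℝ) ≤ v i₀ - (1-δ))]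



lemma memG_of {N : ℕ} {A : Matrix (Fin N) (Fin N) ℝ}
    (h : ∀ a b, ∑ i, A i a * A i b = if a = b then (1:ℝ) else 0) :
    A ∈ Matrix.orthogonalGroup (Fin N) ℝ := by
  rw [Matrix.mem_orthogonalGroup_iff']
  ext a b
  rw [Matrix.mul_apply, Matrix.one_apply]
  simpa [Matrix.transpose_apply] using h a b

lemma measEntry {N : ℕ} (a b : Fin N) :
    Measurable (fun O : Matrix (Fin N) (Fin N) ℝ => O a b) :=
  (measurable_pi_apply b).comp (measurable_pi_apply a)

lemma colOrtho' {N : ℕ} {A : Matrix (Fin N) (Fin N) ℝ}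
    (h : A ∈ Matrix.orthogonalGroup (Fin N) ℝ) (a b : Fin N) :
    ∑ i, A i a * A i b = if a = b then 1 else 0 := by
  rw [Matrix.mem_orthogonalGroup_iff'] at h
  have := congrFun (congrFun h a) b
  rw [Matrix.mul_apply, Matrix.one_apply] at this
  simpa [Matrix.transpose_apply] using this

lemma rowOrtho' {N : ℕ} {A : Matrix (Fin N) (Fin N) ℝ}
    (h : A ∈ Matrix.orthogonalGroup (Fin N) ℝ) (a b : Fin N) :
    ∑ i, A a i * A b i = if a = b then 1 else 0 := by
  rw [Matrix.mem_orthogonalGroup_iff] at h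
  have := congrFun (congrFun h a) b
  rw [Matrix.mul_apply, Matrix.one_apply] at this
  simpa [Matrix.transpose_apply] using this

lemma measGram {N : ℕ} (a b : Fin N) :
    Measurable (fun P : Matrix (Fin N) (Fin N) ℝ => ∑ i, P i a * P i b) :=
  Finset.measurable_sum _ fun i _ => (measEntry i a).mul (measEntry i b)

lemma measG {N : ℕ} :
    MeasurableSet {P : Matrix (Fin N) (Fin N) ℝ | P ∈ Matrix.orthogonalGroup (Fin N) ℝ} := by
  have hset : {P : Matrix (Fin N) (Fin N) ℝ | P ∈ Matrix.orthogonalGroup (Fin N) ℝ}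
      = ⋂ (a : Fin N) (b : Fin N),
        {P : Matrix (Fin N) (Fin N) ℝ | ∑ i, P i a * P i b = if a = b then (1:ℝ) else 0} := by
    ext P
    simp only [Set.mem_iInter, Set.mem_setOf_eq]
    exact ⟨fun h a b => colOrtho' h a b, fun h => memG_of h⟩
  rw [hset]
  exact MeasurableSet.iInter fun a => MeasurableSet.iInter fun b =>
    measurableSet_eq_fun (measGram a b) measurable_const

lemma measMulLeft {N : ℕ} (Q : Matrix (Fin N) (Fin N) ℝ) :
    Measurable (fun O : Matrix (Fin N) (Fin N) ℝ => Q * O) := by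
  apply measurable_pi_lambda; intro a; apply measurable_pi_lambda; intro b
  have : (fun O : Matrix (Fin N) (Fin N) ℝ => (Q * O) a b) = fun O => ∑ i, Q a i * O i b := by
    funext O; rw [Matrix.mul_apply]
  rw [this]
  exact Finset.measurable_sum _ fun i _ => measurable_const.mul (measEntry i b)

lemma posMeasureCol {N : ℕ} (hN : 1 ≤ N)
    (μ : Measure (Matrix (Fin N) (Fin N) ℝ)) [IsProbabilityMeasure μ]
    (hμsupp : μ {O | O ∈ Matrix.orthogonalGroup (Fin N) ℝ} = 1)
    (hμinv : ∀ Q ∈ Matrix.orthogonalGroup (Fin N) ℝ,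
        Measure.map (fun O => Q * O) μ = μ)
    (j₀ : Fin N) (δ : ℝ) (hδ : 0 < δ) :
    0 < μ {P | P ∈ Matrix.orthogonalGroup (Fin N) ℝ ∧ 1 - δ < P ⟨0, hN⟩ j₀} := by
  classical
  set i₀ : Fin N := ⟨0, hN⟩
  set G := Matrix.orthogonalGroup (Fin N) ℝ
  set A : Set (Matrix (Fin N) (Fin N) ℝ) := {P | P ∈ G ∧ 1 - δ < P i₀ j₀} with hA
  have measA : MeasurableSet A :=
    measG.inter (measurableSet_lt measurable_const (measEntry i₀ j₀))
  rw [pos_iff_ne_zero]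
  intro hzero
  haveI : SecondCountableTopology (Matrix (Fin N) (Fin N) ℝ) :=
    inferInstanceAs (SecondCountableTopology (Fin N → Fin N → ℝ))
  set S : Set (Matrix (Fin N) (Fin N) ℝ) := {P | P ∈ G} with hS
  set fset : Matrix (Fin N) (Fin N) ℝ → Set (Matrix (Fin N) (Fin N) ℝ) :=
    fun P => {O | 1 - δ < ∑ i, P i j₀ * O i j₀} with hfset
  have hopen : ∀ P, IsOpen (fset P) := by
    intro P
    have hcont : Continuous (fun O : Matrix (Fin N) (Fin N) ℝ => ∑ i, P i j₀ * O i j₀) :=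
      continuous_finset_sum _ fun i _ =>
        continuous_const.mul ((continuous_apply j₀).comp (continuous_apply i))
    exact isOpen_lt continuous_const hcont
  have hmem : ∀ P ∈ S, P ∈ fset P := by
    intro P hP
    have := colOrtho' hP j₀ j₀
    simp only [if_pos rfl] at this
    have h1 : ∑ i, P i j₀ * P i j₀ = 1 := this
    simp only [hfset, Set.mem_setOf_eq, h1]
    linarith
  have hnhds : ∀ P ∈ S, fset P ∈ nhdsWithin P S := fun P hP =>
    mem_nhdsWithin_of_mem_nhds ((hopen P).mem_nhds (hmem P hP))
  obtain ⟨t, htS, htc, hcover⟩ := TopologicalSpace.countable_cover_nhdsWithin hnhds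
  set σ : Equiv.Perm (Fin N) := Equiv.swap i₀ j₀ with hσ
  set Qf : Matrix (Fin N) (Fin N) ℝ → Matrix (Fin N) (Fin N) ℝ :=
    fun P => Matrix.of (fun a b => P b (σ a)) with hQf
  have hQmem : ∀ P ∈ S, Qf P ∈ G := by
    intro P hP
    apply memG_of
    intro a b
    have : ∑ i, Qf P i a * Qf P i b = ∑ i, P a (σ i) * P b (σ i) := rfl
    rw [this, Equiv.sum_comp σ (fun i => P a i * P b i)]
    exact rowOrtho' hP a b
  have hsubset : ∀ P ∈ t, S ∩ fset P ⊆ (fun O => Qf P * O) ⁻¹' A := by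
    intro P hP O hO
    obtain ⟨hOS, hOf⟩ := hO
    constructor
    · exact mul_mem (hQmem P (htS hP)) hOS
    · show 1 - δ < (Qf P * O) i₀ j₀
      have : (Qf P * O) i₀ j₀ = ∑ i, P i (σ i₀) * O i j₀ := by
        rw [Matrix.mul_apply]; rfl
      rw [this]
      have hswap : σ i₀ = j₀ := Equiv.swap_apply_left i₀ j₀
      rw [hswap]
      exact hOf
  have hprenull : ∀ P ∈ t, μ ((fun O => Qf P * O) ⁻¹' A) = 0 := by
    intro P hP
    have hQ := hQmem P (htS hP)
    have := hμinv (Qf P) hQ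
    calc μ ((fun O => Qf P * O) ⁻¹' A)
        = Measure.map (fun O => Qf P * O) μ A := (Measure.map_apply (measMulLeft (Qf P)) measA).symm
      _ = μ A := by rw [this]
      _ = 0 := hzero
  have hSnull : μ S = 0 := by
    have hsub : S ⊆ ⋃ P ∈ t, (fun O => Qf P * O) ⁻¹' A := by
      intro x hx
      obtain ⟨P, hPt, hxP⟩ := Set.mem_iUnion₂.1 (hcover hx)
      exact Set.mem_iUnion₂.2 ⟨P, hPt, hsubset P hPt ⟨hx, hxP⟩⟩
    have : μ (⋃ P ∈ t, (fun O => Qf P * O) ⁻¹' A) = 0 :=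
      (measure_biUnion_null_iff htc).2 hprenull
    exact le_antisymm (this ▸ measure_mono hsub) zero_le
  rw [hμsupp] at hSnull
  exact one_ne_zero hSnull

end Helpers

set_option maxHeartbeats 2000000 in
/-- Logarithmic Laplace asymptotics for the cyclic orthogonal-group integral:
with `T` the cyclic product `(ᵗO^{(1)}O^{(2)})_{j_1,j_2} ⋯ (ᵗO^{(k)}O^{(1)})_{j_k,j_1}`
and `W = ∑_{r<l} ((ᵗO^{(r)}O^{(l)})_{j_r,j_l})²`, the integral
`I(s) = ∫ T e^{sW} dO^{(1)}⋯dO^{(k)}` is eventually positive and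
`(1/s) ln I(s) → k(k−1)/2` as `s → ∞`. -/
theorem stmt_18 (N : ℕ) (hN : 1 ≤ N) (k : ℕ) (hk : 2 ≤ k)
    (μ : Measure (Matrix (Fin N) (Fin N) ℝ)) [IsProbabilityMeasure μ]
    (hμsupp : μ {O | O ∈ Matrix.orthogonalGroup (Fin N) ℝ} = 1)
    (hμinv : ∀ Q ∈ Matrix.orthogonalGroup (Fin N) ℝ,
        Measure.map (fun O => Q * O) μ = μ)
    (j : Fin k → Fin N)
    (W : (Fin k → Matrix (Fin N) (Fin N) ℝ) → ℝ)
    (hW : W = fun O => ∑ r, ∑ l ∈ Finset.univ.filter fun l => r < l,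
        (((O r)ᵀ * O l) (j r) (j l)) ^ 2)
    (T : (Fin k → Matrix (Fin N) (Fin N) ℝ) → ℝ)
    (hT : T = fun O => ∏ r : Fin k,
        ((O r)ᵀ * O (r + ⟨1, by omega⟩)) (j r) (j (r + ⟨1, by omega⟩)))
    (I : ℝ → ℝ)
    (hI : I = fun s => ∫ O, T O * Real.exp (s * W O)
        ∂(Measure.pi fun _ : Fin k => μ)) :
    (∃ s₀ : ℝ, ∀ s, s₀ ≤ s → 0 < I s) ∧
      Tendsto (fun s => Real.log (I s) / s) atTop (nhds ((k * (k - 1) : ℝ) / 2)) := by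
  classical
  haveI : NeZero k := ⟨by omega⟩
  set ν : Measure (Fin k → Matrix (Fin N) (Fin N) ℝ) := Measure.pi fun _ : Fin k => μ with hν
  haveI hνprob : IsProbabilityMeasure ν := by rw [hν]; infer_instance
  set M : ℝ := (k * (k - 1) : ℝ) / 2 with hM
  have hk2 : (2:ℝ) ≤ (k:ℝ) := by exact_mod_cast hk
  have hkpos : (0:ℝ) < (k:ℝ) := by linarith
  have hM1 : 1 ≤ M := by rw [hM]; nlinarith
  have hMpos : 0 < M := by linarith
  set i₀ : Fin N := ⟨0, hN⟩ with hi₀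
  set Ω : Set (Fin k → Matrix (Fin N) (Fin N) ℝ) :=
    Set.pi Set.univ (fun _ => {P | P ∈ Matrix.orthogonalGroup (Fin N) ℝ}) with hΩ
  have hΩmeas : MeasurableSet Ω :=
    MeasurableSet.pi Set.countable_univ (fun r _ => measG)
  have hΩone : ν Ω = 1 := by
    rw [hΩ, hν, Measure.pi_pi]
    have : μ {P | P ∈ Matrix.orthogonalGroup (Fin N) ℝ} = 1 := hμsupp
    rw [Finset.prod_congr rfl (fun r _ => this), Finset.prod_const, one_pow]
  have hΩae : ∀ᵐ O ∂ν, O ∈ Ω := by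
    have hc : ν Ωᶜ = 0 := by
      rw [measure_compl hΩmeas (measure_ne_top _ _), hΩone, measure_univ]
      simp
    rw [ae_iff]
    exact hc
  have hΩmem : ∀ O ∈ Ω, ∀ r : Fin k, O r ∈ Matrix.orthogonalGroup (Fin N) ℝ :=
    fun O hO r => hO r (Set.mem_univ r)
  -- rewrite W and T as explicit sums of column inner products
  have hWeq : ∀ O, W O = ∑ r, ∑ l ∈ Finset.univ.filter fun l => r < l,
      (∑ i, O r i (j r) * O l i (j l)) ^ 2 := by
    intro O
    rw [hW]
    refine Finset.sum_congr rfl fun r _ => Finset.sum_congr rfl fun l _ => ?_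
    rw [Matrix.mul_apply]
    rfl
  have hTeq : ∀ O, T O = ∏ r : Fin k,
      (∑ i, O r i (j r) * O (r + ⟨1, by omega⟩) i (j (r + ⟨1, by omega⟩))) := by
    intro O
    rw [hT]
    refine Finset.prod_congr rfl fun r _ => ?_
    rw [Matrix.mul_apply]
    rfl
  -- measurability
  have hcmeas : ∀ (r l : Fin k) (a b : Fin N),
      Measurable (fun O : Fin k → Matrix (Fin N) (Fin N) ℝ => ∑ i, O r i a * O l i b) :=
    fun r l a b => Finset.measurable_sum _ fun i _ =>
      ((measEntry i a).comp (measurable_pi_apply r)).mul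
        ((measEntry i b).comp (measurable_pi_apply l))
  have hWmeas : Measurable W := by
    have : W = fun O => ∑ r, ∑ l ∈ Finset.univ.filter fun l => r < l,
        (∑ i, O r i (j r) * O l i (j l)) ^ 2 := funext hWeq
    rw [this]
    exact Finset.measurable_sum _ fun r _ => Finset.measurable_sum _ fun l _ =>
      (hcmeas r l (j r) (j l)).pow_const 2
  have hTmeas : Measurable T := by
    have : T = fun O => ∏ r : Fin k,
        (∑ i, O r i (j r) * O (r + ⟨1, by omega⟩) i (j (r + ⟨1, by omega⟩))) := funext hTeq
    rw [this]
    exact Finset.measurable_prod _ fun r _ => hcmeas _ _ _ _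
  have hfmeas : ∀ s : ℝ, Measurable (fun O => T O * Real.exp (s * W O)) :=
    fun s => hTmeas.mul ((measurable_const.mul hWmeas).exp)
  -- pointwise facts on Ω
  have hunit : ∀ O ∈ Ω, ∀ r : Fin k, ∑ i, (O r i (j r)) ^ 2 = 1 := by
    intro O hO r
    have := colOrtho' (hΩmem O hO r) (j r) (j r)
    rw [if_pos rfl] at this
    rw [← this]
    exact Finset.sum_congr rfl fun i _ => sq (O r i (j r))
  have hTabs : ∀ O ∈ Ω, |T O| ≤ 1 := by
    intro O hO
    rw [hTeq O, Finset.abs_prod]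
    refine Finset.prod_le_one (fun r _ => abs_nonneg _) (fun r _ => ?_)
    have hcs := Finset.sum_mul_sq_le_sq_mul_sq Finset.univ
      (fun i => O r i (j r)) (fun i => O (r + ⟨1, by omega⟩) i (j (r + ⟨1, by omega⟩)))
    rw [hunit O hO r, hunit O hO (r + ⟨1, by omega⟩)] at hcs
    rw [abs_le]
    constructor <;> nlinarith [hcs]
  have hWle : ∀ O ∈ Ω, W O ≤ M := by
    intro O hO
    rw [hWeq O, hM]
    exact WtotalUpper (fun r => fun i => O r i (j r)) (hunit O hO)
  -- integrability
  have hInt : ∀ s : ℝ, 0 ≤ s → Integrable (fun O => T O * Real.exp (s * W O)) ν := by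
    intro s hs
    refine Integrable.mono' (integrable_const (Real.exp (s * M)))
      (hfmeas s).aestronglyMeasurable ?_
    filter_upwards [hΩae] with O hO
    rw [norm_mul, Real.norm_eq_abs, Real.norm_eq_abs, Real.abs_exp]
    calc |T O| * Real.exp (s * W O) ≤ 1 * Real.exp (s * M) := by
          refine mul_le_mul (hTabs O hO) (Real.exp_le_exp.2 ?_) (Real.exp_pos _).le zero_le_one
          exact mul_le_mul_of_nonneg_left (hWle O hO) hs
      _ = Real.exp (s * M) := one_mul _
  have hIle : ∀ s : ℝ, 0 ≤ s → I s ≤ Real.exp (s * M) := by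
    intro s hs
    rw [hI]
    calc ∫ O, T O * Real.exp (s * W O) ∂ν
        ≤ ∫ _O, Real.exp (s * M) ∂ν := by
          refine integral_mono_ae (hInt s hs) (integrable_const _) ?_
          filter_upwards [hΩae] with O hO
          calc T O * Real.exp (s * W O) ≤ |T O| * Real.exp (s * W O) :=
                mul_le_mul_of_nonneg_right (le_abs_self _) (Real.exp_pos _).le
            _ ≤ 1 * Real.exp (s * M) := by
                refine mul_le_mul (hTabs O hO) (Real.exp_le_exp.2 ?_) (Real.exp_pos _).le zero_le_one
                exact mul_le_mul_of_nonneg_left (hWle O hO) hs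
            _ = Real.exp (s * M) := one_mul _
      _ = Real.exp (s * M) := by simp
  -- the master estimate
  have master : ∀ η : ℝ, 0 < η → η ≤ 1 / (4 * k) → ∃ s₀ : ℝ, 1 ≤ s₀ ∧
      ∀ s, s₀ ≤ s → 0 < I s ∧ M - η ≤ Real.log (I s) / s ∧ Real.log (I s) / s ≤ M := by
    intro η hη hηk
    have hη1 : η ≤ 1 := by
      have : 1 / (4 * (k:ℝ)) ≤ 1 := by
        rw [div_le_one (by positivity)]
        nlinarith
      linarith
    set δ : ℝ := η / (16 * M) with hδdef
    have hδ0 : 0 < δ := by positivity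
    have hδ16 : δ ≤ 1 / 16 := by
      rw [hδdef, div_le_div_iff₀ (by positivity) (by norm_num)]
      nlinarith
    have hδ1 : δ ≤ 1 := by linarith
    set A : Fin k → Set (Matrix (Fin N) (Fin N) ℝ) :=
      fun r => {P | P ∈ Matrix.orthogonalGroup (Fin N) ℝ ∧ 1 - δ < P i₀ (j r)} with hA
    have hAmeas : ∀ r, MeasurableSet (A r) := fun r =>
      measG.inter (measurableSet_lt measurable_const (measEntry i₀ (j r)))
    have hApos : ∀ r, 0 < μ (A r) := fun r => posMeasureCol hN μ hμsupp hμinv (j r) δ hδ0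
    set E' : Set (Fin k → Matrix (Fin N) (Fin N) ℝ) := Set.pi Set.univ A with hE'
    have hE'meas : MeasurableSet E' := MeasurableSet.pi Set.countable_univ (fun r _ => hAmeas r)
    have hE'val : ν E' = ∏ r, μ (A r) := by rw [hE', hν, Measure.pi_pi]
    set p : ℝ := (ν E').toReal with hpdef
    have hppos : 0 < p := by
      rw [hpdef]
      refine ENNReal.toReal_pos ?_ (measure_ne_top _ _)
      rw [hE'val]
      exact Finset.prod_ne_zero_iff.2 (fun r _ => (hApos r).ne')
    have hple : p ≤ 1 := by
      rw [hpdef]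
      exact ENNReal.toReal_le_of_le_ofReal zero_le_one (by simpa using prob_le_one)
    set Eη : Set (Fin k → Matrix (Fin N) (Fin N) ℝ) := Ω ∩ {O | M - η ≤ W O} with hEηdef
    have hEηmeas : MeasurableSet Eη :=
      hΩmeas.inter (measurableSet_le measurable_const hWmeas)
    have hE'Ω : E' ⊆ Ω := by
      intro O hO r _
      exact (hO r (Set.mem_univ r)).1
    have hE'W : ∀ O ∈ E', M - η / 2 ≤ W O := by
      intro O hO
      rw [hWeq O]
      have hcol : ∀ r l : Fin k, r < l →
          1 - 8 * δ ≤ (∑ i, O r i (j r) * O l i (j l)) ^ 2 := by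
        intro r l _
        have hur := hunit O (hE'Ω hO) r
        have hul := hunit O (hE'Ω hO) l
        have h1 : 1 - δ ≤ O r i₀ (j r) := ((hO r (Set.mem_univ r)).2).le
        have h2 : 1 - δ ≤ O l i₀ (j l) := ((hO l (Set.mem_univ l)).2).le
        have := innerLarge (fun i => O r i (j r)) (fun i => O l i (j l)) i₀ hur hul δ hδ0.le hδ1 h1 h2
        nlinarith [this]
      have hconst : ∀ c : ℝ, (∑ r : Fin k, ∑ l ∈ Finset.univ.filter fun l => r < l, c)
          = c * M := by
        intro c
        rw [hM, ← countPairs k, Finset.mul_sum]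
        refine Finset.sum_congr rfl fun r _ => ?_
        rw [Finset.mul_sum]
        simp
      have hsum : (∑ r : Fin k, ∑ l ∈ Finset.univ.filter fun l => r < l, (1 - 8*δ))
          ≤ ∑ r, ∑ l ∈ Finset.univ.filter fun l => r < l,
            (∑ i, O r i (j r) * O l i (j l)) ^ 2 := by
        refine Finset.sum_le_sum fun r _ => Finset.sum_le_sum fun l hl => ?_
        exact hcol r l (Finset.mem_filter.1 hl).2
      rw [hconst (1 - 8*δ)] at hsum
      have hδM : δ * (16 * M) = η := div_mul_cancel₀ η (by positivity)
      have : (1 - 8*δ) * M = M - η / 2 := by linear_combination (-1/2) * hδM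
      linarith [hsum]
    have hE'sub : E' ⊆ Eη := by
      intro O hO
      exact ⟨hE'Ω hO, by have := hE'W O hO; simp only [Set.mem_setOf_eq]; linarith⟩
    have hTge : ∀ O ∈ Eη, (1:ℝ)/2 ≤ T O := by
      intro O hO
      obtain ⟨hOΩ, hOW⟩ := hO
      have hOW' : M - η ≤ ∑ r, ∑ l ∈ Finset.univ.filter fun l => r < l,
          (∑ i, O r i (j r) * O l i (j l)) ^ 2 := by
        rw [← hWeq O]; exact hOW
      have hpair := pairFromW (fun r => fun i => O r i (j r)) (hunit O hOΩ) η
        (by rw [← hM]; exact hOW')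
      have := TlowerBound hk (fun r => fun i => O r i (j r)) (hunit O hOΩ) η hη.le hη1 hpair
      rw [← hTeq O] at this
      have h2kη : 2 * (k:ℝ) * η ≤ 1/2 := by
        have := mul_le_mul_of_nonneg_left hηk (by positivity : (0:ℝ) ≤ 2 * k)
        calc 2 * (k:ℝ) * η ≤ 2 * k * (1 / (4*k)) := by nlinarith
          _ = 1/2 := by field_simp; ring
      linarith
    -- thresholds
    set c₁ : ℝ := p / 2 with hc₁
    have hc₁pos : 0 < c₁ := by positivity
    set L : ℝ := |Real.log (c₁ / 2)| with hL
    set s₀ : ℝ := max 1 (max (2 * Real.log (2 / c₁) / η) (2 * L / η)) with hs₀def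
    refine ⟨s₀, le_max_left _ _, ?_⟩
    intro s hs
    have hs1 : 1 ≤ s := le_trans (le_max_left _ _) hs
    have hspos : 0 < s := by linarith
    have hs0 : 0 ≤ s := hspos.le
    -- integral decomposition
    have hint := hInt s hs0
    have hIeq : I s = (∫ O in Eη, T O * Real.exp (s * W O) ∂ν)
        + ∫ O in Eηᶜ, T O * Real.exp (s * W O) ∂ν := by
      rw [hI]
      exact (integral_add_compl hEηmeas hint).symm
    -- lower bound on Eη part
    have hconstle : ∀ O ∈ E', (1/2) * Real.exp (s * (M - η/2)) ≤ T O * Real.exp (s * W O) := by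
      intro O hO
      have h1 : (1:ℝ)/2 ≤ T O := hTge O (hE'sub hO)
      have h2 : Real.exp (s * (M - η/2)) ≤ Real.exp (s * W O) :=
        Real.exp_le_exp.2 (mul_le_mul_of_nonneg_left (hE'W O hO) hs0)
      calc (1/2) * Real.exp (s * (M - η/2)) ≤ (1/2) * Real.exp (s * W O) := by
            exact mul_le_mul_of_nonneg_left h2 (by norm_num)
        _ ≤ T O * Real.exp (s * W O) :=
            mul_le_mul_of_nonneg_right h1 (Real.exp_pos _).le
    have hlow1 : (1/2) * Real.exp (s * (M - η/2)) * p
        ≤ ∫ O in E', T O * Real.exp (s * W O) ∂ν := by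
      rw [hpdef]
      exact setIntegral_ge_of_const_le_real hE'meas (measure_ne_top _ _) hconstle hint.integrableOn
    have hlow2 : (∫ O in E', T O * Real.exp (s * W O) ∂ν)
        ≤ ∫ O in Eη, T O * Real.exp (s * W O) ∂ν := by
      refine setIntegral_mono_set hint.integrableOn ?_ (HasSubset.Subset.eventuallyLE hE'sub)
      rw [EventuallyLE, ae_restrict_iff' hEηmeas]
      refine ae_of_all _ fun O hO => ?_
      have := hTge O hO
      have := (Real.exp_pos (s * W O)).le
      positivity
    -- upper bound on complement part
    have hcompl : |∫ O in Eηᶜ, T O * Real.exp (s * W O) ∂ν| ≤ Real.exp (s * (M - η)) := by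
      have hb : ∀ᵐ O ∂ν, O ∈ Eηᶜ → ‖T O * Real.exp (s * W O)‖ ≤ Real.exp (s * (M - η)) := by
        filter_upwards [hΩae] with O hOΩ hOc
        have hOW : W O < M - η := by
          by_contra hcon
          exact hOc ⟨hOΩ, by simp only [Set.mem_setOf_eq]; linarith⟩
        rw [norm_mul, Real.norm_eq_abs, Real.norm_eq_abs, Real.abs_exp]
        calc |T O| * Real.exp (s * W O) ≤ 1 * Real.exp (s * (M - η)) := by
              refine mul_le_mul (hTabs O hOΩ) (Real.exp_le_exp.2 ?_) (Real.exp_pos _).le zero_le_one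
              exact mul_le_mul_of_nonneg_left hOW.le hs0
          _ = Real.exp (s * (M - η)) := one_mul _
      have := norm_setIntegral_le_of_norm_le_const_ae' (measure_lt_top ν Eηᶜ) hb
      rw [Real.norm_eq_abs] at this
      calc |∫ O in Eηᶜ, T O * Real.exp (s * W O) ∂ν|
          ≤ Real.exp (s * (M - η)) * (ν Eηᶜ).toReal := this
        _ ≤ Real.exp (s * (M - η)) * 1 := by
            refine mul_le_mul_of_nonneg_left ?_ (Real.exp_pos _).le
            exact ENNReal.toReal_le_of_le_ofReal zero_le_one (by simpa using prob_le_one)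
        _ = Real.exp (s * (M - η)) := mul_one _
    -- combine
    have hkey : c₁ * Real.exp (s * (M - η/2)) - Real.exp (s * (M - η)) ≤ I s := by
      rw [hIeq]
      have h1 : c₁ * Real.exp (s * (M - η/2)) ≤ ∫ O in Eη, T O * Real.exp (s * W O) ∂ν := by
        calc c₁ * Real.exp (s * (M - η/2)) = (1/2) * Real.exp (s * (M - η/2)) * p := by
              rw [hc₁]; ring
          _ ≤ _ := hlow1.trans hlow2
      have h2 : -(Real.exp (s * (M - η))) ≤ ∫ O in Eηᶜ, T O * Real.exp (s * W O) ∂ν :=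
        neg_le_of_abs_le hcompl
      linarith
    -- exponential comparison
    have hsη : 2 * Real.log (2 / c₁) / η ≤ s := le_trans (le_trans (le_max_left _ _) (le_max_right _ _)) hs
    have hsL : 2 * L / η ≤ s := le_trans (le_trans (le_max_right _ _) (le_max_right _ _)) hs
    have hlog2c : Real.log (2 / c₁) ≤ s * η / 2 := by
      have := (div_le_iff₀ hη).1 hsη
      linarith
    have h2c : 2 / c₁ ≤ Real.exp (s * η / 2) := by
      rw [← Real.exp_log (show (0:ℝ) < 2 / c₁ by positivity)]
      exact Real.exp_le_exp.2 hlog2c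
    have h2c' : Real.exp (-(s * η / 2)) ≤ c₁ / 2 := by
      rw [Real.exp_neg]
      rw [inv_le_comm₀ (Real.exp_pos _) (by positivity)]
      rw [inv_div]
      exact h2c
    have hexpcomp : Real.exp (s * (M - η)) ≤ c₁ / 2 * Real.exp (s * (M - η/2)) := by
      calc Real.exp (s * (M - η)) = Real.exp (s * (M - η/2)) * Real.exp (-(s * η / 2)) := by
            rw [← Real.exp_add]; congr 1; ring
        _ ≤ Real.exp (s * (M - η/2)) * (c₁ / 2) :=
            mul_le_mul_of_nonneg_left h2c' (Real.exp_pos _).le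
        _ = c₁ / 2 * Real.exp (s * (M - η/2)) := mul_comm _ _
    have hIpos : c₁ / 2 * Real.exp (s * (M - η/2)) ≤ I s := by
      have : c₁ * Real.exp (s * (M - η/2)) - c₁/2 * Real.exp (s * (M - η/2))
          = c₁/2 * Real.exp (s * (M - η/2)) := by ring
      linarith [hkey, hexpcomp]
    have hI0 : 0 < I s := lt_of_lt_of_le (by positivity) hIpos
    refine ⟨hI0, ?_, ?_⟩
    · -- lower bound for log I s / s
      have hlogI : Real.log (c₁/2) + s * (M - η/2) ≤ Real.log (I s) := by
        have h1 : Real.log (c₁ / 2 * Real.exp (s * (M - η/2))) ≤ Real.log (I s) :=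
          (Real.log_le_log_iff (by positivity) hI0).2 hIpos
        rwa [Real.log_mul (by positivity) (Real.exp_ne_zero _), Real.log_exp] at h1
      rw [le_div_iff₀ hspos]
      have hLs : L ≤ s * η / 2 := by
        have := (div_le_iff₀ hη).1 hsL
        linarith
      have hnegL : -L ≤ Real.log (c₁/2) := neg_abs_le _
      nlinarith
    · -- upper bound
      have h1 : Real.log (I s) ≤ s * M := by
        have := (Real.log_le_log_iff hI0 (Real.exp_pos _)).2 (hIle s hs0)
        rwa [Real.log_exp] at this
      rw [div_le_iff₀ hspos]
      linarith
  -- conclude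
  constructor
  · obtain ⟨s₀, _, hs₀⟩ := master (1 / (4*k)) (by positivity) le_rfl
    exact ⟨s₀, fun s hs => (hs₀ s hs).1⟩
  · rw [Metric.tendsto_atTop]
    intro ε hε
    set η : ℝ := min (ε/2) (1 / (4*k)) with hηdef
    have hη0 : 0 < η := lt_min (by linarith) (by positivity)
    obtain ⟨s₀, _, hs₀⟩ := master η hη0 (min_le_right _ _)
    refine ⟨s₀, fun s hs => ?_⟩
    obtain ⟨_, hlow, hup⟩ := hs₀ s hs
    rw [Real.dist_eq]
    have hηε : η ≤ ε/2 := min_le_left _ _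
    have habs : |Real.log (I s) / s - M| ≤ η := abs_le.2 ⟨by linarith, by linarith⟩
    calc |Real.log (I s) / s - M| ≤ η := habs
      _ ≤ ε/2 := hηε
      _ < ε := by linarith
end

section
/- Let d ≥ 1, N ≥ 2, k ≥ 2 be integers, γ > 0 and c > −1 real numbers, and let x_1,…,x_k ∈ ℝ^d be pairwise distinct points with |x_r − x_l| ≤ 1 for all r < l; set σ²_{rl} = γ² ln(1/|x_r − x_l|) ≥ 0. For 1 ≤ i, j ≤ N define F_{i,j}(x_1,…,x_k) = ∑_{j_1,…,j_k=1}^N ∫_{O_N(ℝ)^k} O^{(1)}_{i,j_1} (ᵗO^{(1)}O^{(2)})_{j_1,j_2} ⋯ (ᵗO^{(k−1)}O^{(k)})_{j_{k−1},j_k} O^{(k)}_{j,j_k} · exp((1+c) ∑_{1≤r<l≤k} σ²_{rl} ((ᵗO^{(r)}O^{(l)})_{j_r,j_l})²) dO^{(1)}⋯dO^{(k)}, the integral being with respect to the product of Haar probability measures on O_N(ℝ). Then e^{−c ∑_{r<l} σ²_{rl}} ∑_{i=1}^N F_{i,i}(x_1,…,x_k) ≤ N^k ∏_{1≤r<l≤k}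 |x_r − x_l|^{−γ²}. -/
open MeasureTheory Matrix Finset

section Aux

variable {N : ℕ}

lemma aux_mem_iff (O : Matrix (Fin N) (Fin N) ℝ) :
    O ∈ Matrix.orthogonalGroup (Fin N) ℝ ↔ Oᵀ * O = 1 := by
  rw [Matrix.mem_orthogonalGroup_iff']

lemma aux_transpose_mem {O : Matrix (Fin N) (Fin N) ℝ}
    (hO : O ∈ Matrix.orthogonalGroup (Fin N) ℝ) :
    Oᵀ ∈ Matrix.orthogonalGroup (Fin N) ℝ := by
  rw [aux_mem_iff] at hO ⊢
  rw [Matrix.transpose_transpose]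
  rwa [mul_eq_one_comm]

lemma aux_abs_entry_le_one {O : Matrix (Fin N) (Fin N) ℝ}
    (hO : O ∈ Matrix.orthogonalGroup (Fin N) ℝ) (i j : Fin N) : |O i j| ≤ 1 := by
  have h1 : (Oᵀ * O) j j = 1 := by
    rw [(aux_mem_iff O).mp hO]; simp [Matrix.one_apply]
  have h2 : ∑ m, O m j * O m j = 1 := by
    simpa [Matrix.mul_apply, Matrix.transpose_apply] using h1
  have hterm : O i j * O i j ≤ 1 := by
    calc O i j * O i j ≤ ∑ m, O m j * O m j :=
          Finset.single_le_sum (f := fun m => O m j * O m j)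
            (fun m _ => mul_self_nonneg _) (Finset.mem_univ i)
      _ = 1 := h2
  exact abs_le_one_iff_mul_self_le_one.mpr hterm

lemma aux_measurable_entry (i j : Fin N) :
    Measurable fun O : Matrix (Fin N) (Fin N) ℝ => O i j := by
  exact ((measurable_pi_apply j).comp (measurable_pi_apply i) :
    Measurable fun O : (Fin N) → (Fin N) → ℝ => O i j)

lemma aux_measurableSet_orth :
    MeasurableSet {O : Matrix (Fin N) (Fin N) ℝ | O ∈ Matrix.orthogonalGroup (Fin N) ℝ} := by
  have hset : {O : Matrix (Fin N) (Fin N) ℝ | O ∈ Matrix.orthogonalGroup (Fin N) ℝ}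
      = ⋂ i : Fin N, ⋂ j : Fin N,
          {O : Matrix (Fin N) (Fin N) ℝ | (Oᵀ * O) i j = (1 : Matrix (Fin N) (Fin N) ℝ) i j} := by
    ext O
    simp only [Set.mem_setOf_eq, Set.mem_iInter, aux_mem_iff]
    constructor
    · intro h i j; rw [h]
    · intro h; ext i j; exact h i j
  rw [hset]
  refine MeasurableSet.iInter fun i => MeasurableSet.iInter fun j => ?_
  have hm : Measurable fun O : Matrix (Fin N) (Fin N) ℝ => (Oᵀ * O) i j := by
    simp only [Matrix.mul_apply, Matrix.transpose_apply]
    exact Finset.measurable_sum _ fun m _ =>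
      (aux_measurable_entry m i).mul (aux_measurable_entry m j)
  exact hm (measurableSet_singleton _)

variable {k : ℕ}

lemma aux_measurable_entry' (r : Fin k) (a b : Fin N) :
    Measurable fun O : Fin k → Matrix (Fin N) (Fin N) ℝ => (O r) a b :=
  (aux_measurable_entry a b).comp (measurable_pi_apply r)

lemma aux_measurable_mul_entry (r l : Fin k) (a b : Fin N) :
    Measurable fun O : Fin k → Matrix (Fin N) (Fin N) ℝ => ((O r)ᵀ * O l) a b := by
  simp only [Matrix.mul_apply, Matrix.transpose_apply]
  exact Finset.measurable_sum _ fun m _ =>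
    (aux_measurable_entry' r m a).mul (aux_measurable_entry' l m b)

lemma aux_ae_orth (μ : Measure (Matrix (Fin N) (Fin N) ℝ)) [IsProbabilityMeasure μ]
    (hμsupp : μ {O | O ∈ Matrix.orthogonalGroup (Fin N) ℝ} = 1) :
    ∀ᵐ O ∂(Measure.pi fun _ : Fin k => μ),
      ∀ r : Fin k, O r ∈ Matrix.orthogonalGroup (Fin N) ℝ := by
  rw [MeasureTheory.ae_all_iff]
  intro r
  have hc0 : μ {O : Matrix (Fin N) (Fin N) ℝ | O ∈ Matrix.orthogonalGroup (Fin N) ℝ}ᶜ = 0 := by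
    have h := measure_compl (aux_measurableSet_orth (N := N)) (measure_ne_top μ _)
    rw [hμsupp, measure_univ] at h
    simpa using h
  have h0 : (Measure.pi fun _ : Fin k => μ)
      (Function.eval r ⁻¹' {O : Matrix (Fin N) (Fin N) ℝ |
        O ∈ Matrix.orthogonalGroup (Fin N) ℝ}ᶜ) = 0 :=
    MeasureTheory.Measure.pi_eval_preimage_null _ hc0
  rw [MeasureTheory.ae_iff]
  exact h0

/-- Key quantitative bound. -/
lemma aux_key {k N : ℕ} (i0 iL : Fin k) (nx : Fin k → Fin k) (t : Finset (Fin k))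
    (μ : Measure (Matrix (Fin N) (Fin N) ℝ)) [IsProbabilityMeasure μ]
    (hμsupp : μ {O | O ∈ Matrix.orthogonalGroup (Fin N) ℝ} = 1)
    (cc : ℝ) (hcc : 0 ≤ cc)
    (w : Fin k → Fin k → ℝ) (hw : ∀ r l : Fin k, r < l → 0 ≤ w r l) :
    (∑ i : Fin N, ∑ jv : Fin k → Fin N,
      ∫ O : Fin k → Matrix (Fin N) (Fin N) ℝ,
        (O i0) i (jv i0)
          * (∏ r ∈ t, ((O r)ᵀ * O (nx r)) (jv r) (jv (nx r)))
          * (O iL) i (jv iL)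
          * Real.exp (cc * ∑ r, ∑ l ∈ Finset.univ.filter fun l => r < l,
              w r l * (((O r)ᵀ * O l) (jv r) (jv l)) ^ 2)
        ∂(Measure.pi fun _ : Fin k => μ))
      ≤ (N : ℝ) ^ k
          * Real.exp (cc * ∑ r, ∑ l ∈ Finset.univ.filter (fun l => r < l), w r l) := by
  classical
  set ν := Measure.pi (fun _ : Fin k => μ) with hν
  set C : ℝ := Real.exp (cc * ∑ r, ∑ l ∈ Finset.univ.filter (fun l => r < l), w r l) with hC
  have hae : ∀ᵐ O ∂ν, ∀ r : Fin k, O r ∈ Matrix.orthogonalGroup (Fin N) ℝ :=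
    aux_ae_orth μ hμsupp
  -- pointwise bound on exp factor
  have hexp : ∀ (O : Fin k → Matrix (Fin N) (Fin N) ℝ),
      (∀ r, O r ∈ Matrix.orthogonalGroup (Fin N) ℝ) → ∀ jv : Fin k → Fin N,
      Real.exp (cc * ∑ r, ∑ l ∈ Finset.univ.filter (fun l => r < l),
        w r l * (((O r)ᵀ * O l) (jv r) (jv l)) ^ 2) ≤ C := by
    intro O hO jv
    rw [hC]
    apply Real.exp_le_exp.mpr
    refine mul_le_mul_of_nonneg_left ?_ hcc
    refine Finset.sum_le_sum fun r _ => Finset.sum_le_sum fun l hl => ?_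
    have hrl : r < l := (Finset.mem_filter.mp hl).2
    have habs : |((O r)ᵀ * O l) (jv r) (jv l)| ≤ 1 :=
      aux_abs_entry_le_one (mul_mem (aux_transpose_mem (hO r)) (hO l)) _ _
    have h2 : (((O r)ᵀ * O l) (jv r) (jv l)) ^ 2 ≤ 1 := by
      have h := abs_le.mp habs
      nlinarith [h.1, h.2]
    exact mul_le_of_le_one_right (hw r l hrl) h2
  have hCpos : 0 < C := Real.exp_pos _
  -- integrability
  have hint : ∀ (i : Fin N) (jv : Fin k → Fin N),
      Integrable (fun O : Fin k → Matrix (Fin N) (Fin N) ℝ =>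
        (O i0) i (jv i0)
          * (∏ r ∈ t, ((O r)ᵀ * O (nx r)) (jv r) (jv (nx r)))
          * (O iL) i (jv iL)
          * Real.exp (cc * ∑ r, ∑ l ∈ Finset.univ.filter fun l => r < l,
              w r l * (((O r)ᵀ * O l) (jv r) (jv l)) ^ 2)) ν := by
    intro i jv
    have hmeas : Measurable (fun O : Fin k → Matrix (Fin N) (Fin N) ℝ =>
        (O i0) i (jv i0)
          * (∏ r ∈ t, ((O r)ᵀ * O (nx r)) (jv r) (jv (nx r)))
          * (O iL) i (jv iL)
          * Real.exp (cc * ∑ r, ∑ l ∈ Finset.univ.filter fun l => r < l,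
              w r l * (((O r)ᵀ * O l) (jv r) (jv l)) ^ 2)) := by
      refine (((aux_measurable_entry' i0 i (jv i0)).mul
        (Finset.measurable_prod _ fun r _ => aux_measurable_mul_entry r (nx r) _ _)).mul
        (aux_measurable_entry' iL i (jv iL))).mul
        (Real.measurable_exp.comp (measurable_const.mul
          (Finset.measurable_sum _ fun r _ => Finset.measurable_sum _ fun l _ =>
            measurable_const.mul ((aux_measurable_mul_entry r l _ _).pow_const 2))))
    refine ⟨hmeas.aestronglyMeasurable, MeasureTheory.HasFiniteIntegral.of_bounded (C := C) ?_⟩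
    filter_upwards [hae] with O hO
    rw [Real.norm_eq_abs, abs_mul, abs_mul, abs_mul]
    have hA : |(O i0) i (jv i0)| ≤ 1 := aux_abs_entry_le_one (hO i0) _ _
    have hB : |(O iL) i (jv iL)| ≤ 1 := aux_abs_entry_le_one (hO iL) _ _
    have hP : |∏ r ∈ t, ((O r)ᵀ * O (nx r)) (jv r) (jv (nx r))| ≤ 1 := by
      rw [Finset.abs_prod]
      exact Finset.prod_le_one (fun r _ => abs_nonneg _) fun r _ =>
        aux_abs_entry_le_one (mul_mem (aux_transpose_mem (hO r)) (hO (nx r))) _ _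
    have hE : |Real.exp (cc * ∑ r, ∑ l ∈ Finset.univ.filter fun l => r < l,
        w r l * (((O r)ᵀ * O l) (jv r) (jv l)) ^ 2)| ≤ C := by
      rw [abs_of_pos (Real.exp_pos _)]
      exact hexp O hO jv
    calc |(O i0) i (jv i0)| * |∏ r ∈ t, ((O r)ᵀ * O (nx r)) (jv r) (jv (nx r))|
          * |(O iL) i (jv iL)|
          * |Real.exp (cc * ∑ r, ∑ l ∈ Finset.univ.filter fun l => r < l,
              w r l * (((O r)ᵀ * O l) (jv r) (jv l)) ^ 2)|
        ≤ 1 * 1 * 1 * C := by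
          gcongr <;> first | assumption | positivity
      _ = C := by ring
  -- swap sums and bound each jv-term
  rw [Finset.sum_comm]
  have hone : ∀ jv : Fin k → Fin N,
      (∑ i : Fin N, ∫ O : Fin k → Matrix (Fin N) (Fin N) ℝ,
        (O i0) i (jv i0)
          * (∏ r ∈ t, ((O r)ᵀ * O (nx r)) (jv r) (jv (nx r)))
          * (O iL) i (jv iL)
          * Real.exp (cc * ∑ r, ∑ l ∈ Finset.univ.filter fun l => r < l,
              w r l * (((O r)ᵀ * O l) (jv r) (jv l)) ^ 2) ∂ν) ≤ C := by
    intro jv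
    rw [← MeasureTheory.integral_finset_sum _ (fun i _ => hint i jv)]
    have hb : ∀ᵐ O ∂ν, ‖∑ i : Fin N,
        (O i0) i (jv i0)
          * (∏ r ∈ t, ((O r)ᵀ * O (nx r)) (jv r) (jv (nx r)))
          * (O iL) i (jv iL)
          * Real.exp (cc * ∑ r, ∑ l ∈ Finset.univ.filter fun l => r < l,
              w r l * (((O r)ᵀ * O l) (jv r) (jv l)) ^ 2)‖ ≤ C := by
      filter_upwards [hae] with O hO
      have hre : (∑ i : Fin N,
          (O i0) i (jv i0)
            * (∏ r ∈ t, ((O r)ᵀ * O (nx r)) (jv r) (jv (nx r)))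
            * (O iL) i (jv iL)
            * Real.exp (cc * ∑ r, ∑ l ∈ Finset.univ.filter fun l => r < l,
                w r l * (((O r)ᵀ * O l) (jv r) (jv l)) ^ 2))
          = ((O i0)ᵀ * O iL) (jv i0) (jv iL)
            * ((∏ r ∈ t, ((O r)ᵀ * O (nx r)) (jv r) (jv (nx r)))
              * Real.exp (cc * ∑ r, ∑ l ∈ Finset.univ.filter fun l => r < l,
                w r l * (((O r)ᵀ * O l) (jv r) (jv l)) ^ 2)) := by
        conv_rhs => rw [Matrix.mul_apply]
        rw [Finset.sum_mul]
        refine Finset.sum_congr rfl fun m _ => ?_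
        rw [Matrix.transpose_apply]
        ring
      rw [Real.norm_eq_abs, hre, abs_mul, abs_mul]
      have hA : |((O i0)ᵀ * O iL) (jv i0) (jv iL)| ≤ 1 :=
        aux_abs_entry_le_one (mul_mem (aux_transpose_mem (hO i0)) (hO iL)) _ _
      have hP : |∏ r ∈ t, ((O r)ᵀ * O (nx r)) (jv r) (jv (nx r))| ≤ 1 := by
        rw [Finset.abs_prod]
        exact Finset.prod_le_one (fun r _ => abs_nonneg _) fun r _ =>
          aux_abs_entry_le_one (mul_mem (aux_transpose_mem (hO r)) (hO (nx r))) _ _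
      have hE : |Real.exp (cc * ∑ r, ∑ l ∈ Finset.univ.filter fun l => r < l,
          w r l * (((O r)ᵀ * O l) (jv r) (jv l)) ^ 2)| ≤ C := by
        rw [abs_of_pos (Real.exp_pos _)]
        exact hexp O hO jv
      calc |((O i0)ᵀ * O iL) (jv i0) (jv iL)|
            * (|∏ r ∈ t, ((O r)ᵀ * O (nx r)) (jv r) (jv (nx r))|
              * |Real.exp (cc * ∑ r, ∑ l ∈ Finset.univ.filter fun l => r < l,
                w r l * (((O r)ᵀ * O l) (jv r) (jv l)) ^ 2)|)
          ≤ 1 * (1 * C) := by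
            gcongr <;> first | assumption | positivity
        _ = C := by ring
    refine le_trans (Real.le_norm_self _)
      (le_trans (MeasureTheory.norm_integral_le_of_norm_le_const hb) (by simp))
  calc (∑ jv : Fin k → Fin N, ∑ i : Fin N, ∫ O : Fin k → Matrix (Fin N) (Fin N) ℝ,
        (O i0) i (jv i0)
          * (∏ r ∈ t, ((O r)ᵀ * O (nx r)) (jv r) (jv (nx r)))
          * (O iL) i (jv iL)
          * Real.exp (cc * ∑ r, ∑ l ∈ Finset.univ.filter fun l => r < l,
              w r l * (((O r)ᵀ * O l) (jv r) (jv l)) ^ 2) ∂ν)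
      ≤ ∑ _jv : Fin k → Fin N, C := Finset.sum_le_sum fun jv _ => hone jv
    _ = (N : ℝ) ^ k * C := by
        rw [Finset.sum_const, Finset.card_univ, nsmul_eq_mul, Fintype.card_fun]
        simp

end Aux

/-- Upper bound on the `k`-point correlation functions of the matrix
multiplicative chaos:
`e^{−c ∑_{r<l} σ²_{rl}} ∑_i F_{i,i}(x_1,…,x_k) ≤ N^k ∏_{r<l} |x_r − x_l|^{−γ²}`. -/
theorem stmt_19 (d N k : ℕ) (hd : 1 ≤ d) (hN : 2 ≤ N) (hk : 2 ≤ k)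
    (γ c : ℝ) (hγ : 0 < γ) (hc : -1 < c)
    (x : Fin k → EuclideanSpace ℝ (Fin d)) (hxinj : Function.Injective x)
    (hxle : ∀ r l : Fin k, r < l → ‖x r - x l‖ ≤ 1)
    (μ : Measure (Matrix (Fin N) (Fin N) ℝ)) [IsProbabilityMeasure μ]
    (hμsupp : μ {O | O ∈ Matrix.orthogonalGroup (Fin N) ℝ} = 1)
    (hμinv : ∀ Q ∈ Matrix.orthogonalGroup (Fin N) ℝ,
        Measure.map (fun O => Q * O) μ = μ)
    (σ2 : Fin k → Fin k → ℝ)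
    (hσ2 : σ2 = fun r l => γ ^ 2 * Real.log (1 / ‖x r - x l‖))
    (F : Fin N → Fin N → ℝ)
    (hF : F = fun i j => ∑ jv : Fin k → Fin N,
        ∫ O : Fin k → Matrix (Fin N) (Fin N) ℝ,
          (O ⟨0, by omega⟩) i (jv ⟨0, by omega⟩)
            * (∏ r ∈ Finset.univ.filter fun r : Fin k => (r : ℕ) < k - 1,
                ((O r)ᵀ * O (r + ⟨1, by omega⟩)) (jv r) (jv (r + ⟨1, by omega⟩)))
            * (O ⟨k - 1, by omega⟩) j (jv ⟨k - 1, by omega⟩)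
            * Real.exp ((1 + c)
                * ∑ r, ∑ l ∈ Finset.univ.filter fun l => r < l,
                    σ2 r l * (((O r)ᵀ * O l) (jv r) (jv l)) ^ 2)
          ∂(Measure.pi fun _ : Fin k => μ)) :
    Real.exp (-c * ∑ r, ∑ l ∈ Finset.univ.filter fun l => r < l, σ2 r l)
        * ∑ i, F i i
      ≤ (N : ℝ) ^ k
          * ∏ r, ∏ l ∈ Finset.univ.filter fun l => r < l,
              ‖x r - x l‖ ^ (-(γ ^ 2)) := by
  have hσnn : ∀ r l : Fin k, r < l → 0 ≤ σ2 r l := by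
    intro r l hrl
    have hne : x r ≠ x l := fun h => absurd (hxinj h) (ne_of_lt hrl)
    have hpos : 0 < ‖x r - x l‖ := by
      rw [norm_pos_iff]; exact sub_ne_zero.mpr hne
    have hlog : 0 ≤ Real.log (1 / ‖x r - x l‖) := by
      apply Real.log_nonneg
      rw [le_div_iff₀ hpos]
      simpa using hxle r l hrl
    rw [hσ2]
    exact mul_nonneg (sq_nonneg γ) hlog
  set S : ℝ := ∑ r, ∑ l ∈ Finset.univ.filter fun l => r < l, σ2 r l with hS
  have hRHS : (∏ r, ∏ l ∈ Finset.univ.filter fun l => r < l,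
      ‖x r - x l‖ ^ (-(γ ^ 2))) = Real.exp S := by
    rw [hS, Real.exp_sum]
    refine Finset.prod_congr rfl fun r _ => ?_
    rw [Real.exp_sum]
    refine Finset.prod_congr rfl fun l hl => ?_
    have hrl : r < l := (Finset.mem_filter.mp hl).2
    have hne : x r ≠ x l := fun h => absurd (hxinj h) (ne_of_lt hrl)
    have hpos : 0 < ‖x r - x l‖ := by
      rw [norm_pos_iff]; exact sub_ne_zero.mpr hne
    rw [Real.rpow_def_of_pos hpos]
    congr 1
    rw [hσ2]
    simp only [one_div, Real.log_inv]
    ring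
  have hmain : (∑ i, F i i) ≤ (N : ℝ) ^ k * Real.exp ((1 + c) * S) := by
    have h := aux_key (k := k) (N := N) ⟨0, by omega⟩ ⟨k - 1, by omega⟩
      (fun r => r + ⟨1, by omega⟩)
      (Finset.univ.filter fun r : Fin k => (r : ℕ) < k - 1) μ hμsupp (1 + c)
      (by linarith) σ2 hσnn
    simp only [hF]
    exact h
  rw [hRHS]
  have hE : 0 < Real.exp (-c * S) := Real.exp_pos _
  calc Real.exp (-c * S) * ∑ i, F i i
      ≤ Real.exp (-c * S) * ((N : ℝ) ^ k * Real.exp ((1 + c) * S)) :=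
        mul_le_mul_of_nonneg_left hmain hE.le
    _ = (N : ℝ) ^ k * (Real.exp (-c * S) * Real.exp ((1 + c) * S)) := by ring
    _ = (N : ℝ) ^ k * Real.exp S := by
        rw [← Real.exp_add]
        congr 1
        ring
end
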